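/- arXiv:2012.07492 — 4 statements merged into one kernel-verified Lean document; each statement's English description precedes it below -/
import Mathlib

section
/- Let G be a group, N a normal subgroup with G/N finite cyclic, k an algebraically closed field, and (π, V) an irreducible k-representation of N such that for every g ∈ G the conjugate representation πᵍ is isomorphic to π (G normalizes π). Assume EndN(V) = k (Schur). Then π extends to a representation of G on V, i.e., there exists a representation π̃ of G on V with π̃|N = π. -/
lemma aux_conj_zpow {G E : Type*} [Group G] [Group E] {N : Subgroup G} (hN : N.Normal)
    (pu : N →* E) (g0 : G) (A : E)
    (h : ∀ x : N, A * pu x = pu ⟨g0 * x * g0⁻¹, hN.conj_mem x x.2 g0⟩ * A) :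
    ∀ (t : ℤ) (x : N), A ^ t * pu x =
      pu ⟨g0 ^ t * x * (g0 ^ t)⁻¹, hN.conj_mem x x.2 _⟩ * A ^ t := by
  set c : G → N → N := fun g x => ⟨g * x * g⁻¹, hN.conj_mem x x.2 g⟩ with hc
  have hinv : ∀ x : N, A⁻¹ * pu x = pu (c g0⁻¹ x) * A⁻¹ := by
    intro x
    have hx : c g0 (c g0⁻¹ x) = x := by
      ext
      show g0 * (g0⁻¹ * ↑x * g0⁻¹⁻¹) * g0⁻¹ = ↑x
      group
    have h1 : A * pu (c g0⁻¹ x) = pu x * A := by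
      have h2 := h (c g0⁻¹ x)
      rw [show (⟨g0 * ↑(c g0⁻¹ x) * g0⁻¹, hN.conj_mem _ (c g0⁻¹ x).2 g0⟩ : N)
          = c g0 (c g0⁻¹ x) from rfl, hx] at h2
      exact h2
    calc A⁻¹ * pu x = A⁻¹ * (pu x * A) * A⁻¹ := by group
      _ = A⁻¹ * (A * pu (c g0⁻¹ x)) * A⁻¹ := by rw [h1]
      _ = pu (c g0⁻¹ x) * A⁻¹ := by group
  intro t
  induction t using Int.induction_on with
  | zero =>
      intro x
      show A ^ (0:ℤ) * pu x = pu (c (g0 ^ (0:ℤ)) x) * A ^ (0:ℤ)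
      have hx : c (g0 ^ (0:ℤ)) x = x := by
        ext
        show g0 ^ (0:ℤ) * ↑x * (g0 ^ (0:ℤ))⁻¹ = ↑x
        group
      rw [hx]
      simp
  | succ i ih =>
      intro x
      show A ^ ((i:ℤ)+1) * pu x = pu (c (g0 ^ ((i:ℤ)+1)) x) * A ^ ((i:ℤ)+1)
      have harg : c (g0 ^ (i:ℤ)) (c g0 x) = c (g0 ^ ((i:ℤ)+1)) x := by
        ext
        show g0 ^ (i:ℤ) * (g0 * ↑x * g0⁻¹) * (g0 ^ (i:ℤ))⁻¹
          = g0 ^ ((i:ℤ)+1) * ↑x * (g0 ^ ((i:ℤ)+1))⁻¹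
        group
      have ih' : A ^ (i:ℤ) * pu (c g0 x) = pu (c (g0 ^ (i:ℤ)) (c g0 x)) * A ^ (i:ℤ) :=
        ih (c g0 x)
      rw [zpow_add_one, mul_assoc, h x, ← mul_assoc, ih', harg, mul_assoc]
  | pred i ih =>
      intro x
      show A ^ (-(i:ℤ)-1) * pu x = pu (c (g0 ^ (-(i:ℤ)-1)) x) * A ^ (-(i:ℤ)-1)
      have harg : c (g0 ^ (-(i:ℤ))) (c g0⁻¹ x) = c (g0 ^ (-(i:ℤ)-1)) x := by
        ext
        show g0 ^ (-(i:ℤ)) * (g0⁻¹ * ↑x * g0⁻¹⁻¹) * (g0 ^ (-(i:ℤ)))⁻¹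
          = g0 ^ (-(i:ℤ)-1) * ↑x * (g0 ^ (-(i:ℤ)-1))⁻¹
        group
      have ih' : A ^ (-(i:ℤ)) * pu (c g0⁻¹ x) = pu (c (g0 ^ (-(i:ℤ))) (c g0⁻¹ x)) * A ^ (-(i:ℤ)) :=
        ih (c g0⁻¹ x)
      rw [zpow_sub_one, mul_assoc, hinv x, ← mul_assoc, ih', harg, mul_assoc]


/-- let `G` be a group, `N` a normal subgroup with `G/N` finite cyclic,
`k` an algebraically closed field, and `(π, V)` an irreducible `k`-representation of
`N` which is normalized by `G` (every conjugate `πᵍ` is isomorphic to `π`) and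
satisfies Schur's condition `End_N(V) = k`.  Then `π` extends to a representation of
`G` on `V`. -/
theorem stmt3 {G : Type} [Group G] (N : Subgroup G) [hN : N.Normal]
    [Finite (G ⧸ N)] [IsCyclic (G ⧸ N)]
    {k V : Type} [Field k] [IsAlgClosed k] [AddCommGroup V] [Module k V]
    (π : Representation k N V)
    (hirr : IsSimpleModule (MonoidAlgebra k N) π.asModule)
    (hschur : ∀ f : V →ₗ[k] V, (∀ n : N, f ∘ₗ π n = π n ∘ₗ f) →
      ∃ c : k, f = c • LinearMap.id)
    (hstab : ∀ g : G, ∃ T : V ≃ₗ[k] V, ∀ n : N,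
      (T : V →ₗ[k] V) ∘ₗ π n = π ⟨g * n * g⁻¹, hN.conj_mem n n.2 g⟩ ∘ₗ (T : V →ₗ[k] V)) :
    ∃ π' : Representation k G V, ∀ n : N, π' (n : G) = π n := by

  classical
  obtain ⟨q, hq⟩ := IsCyclic.exists_generator (α := G ⧸ N)
  obtain ⟨g0, hg0⟩ := QuotientGroup.mk_surjective q
  set n : ℕ := orderOf q with hn
  have hnpos : 0 < n := orderOf_pos q
  have hmkz : ∀ (t : ℤ) (g : G), ((g0 ^ t * g : G) : G ⧸ N) = q ^ t * (g : G ⧸ N) := by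
    intro t g
    rw [QuotientGroup.mk_mul, QuotientGroup.mk_zpow, hg0]
  -- membership helper
  have hmemN : ∀ (t : ℤ) (g : G), q ^ t = (g : G ⧸ N) → g0 ^ (-t) * g ∈ N := by
    intro t g hg
    rw [← QuotientGroup.eq_one_iff]
    rw [hmkz, ← hg, ← zpow_add, neg_add_cancel, zpow_zero]
  have hg0n : g0 ^ ((n : ℤ)) ∈ N := by
    have h1 : q ^ ((n : ℤ)) = 1 := by
      rw [zpow_natCast, hn, pow_orderOf_eq_one]
    have := hmemN 0 (g0 ^ (n : ℤ)) (by
      rw [zpow_zero, QuotientGroup.mk_zpow, hg0, h1])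
    simpa using this
  set en : N := ⟨g0 ^ (n : ℤ), hg0n⟩ with hen
  set pu : N →* (V →ₗ[k] V)ˣ := π.asGroupHom with hpu
  have hpuval : ∀ x : N, ((pu x : (V →ₗ[k] V)ˣ) : V →ₗ[k] V) = π x := fun x =>
    π.asGroupHom_apply x
  obtain ⟨T, hT⟩ := hstab g0
  set A0 : (V →ₗ[k] V)ˣ :=
    ⟨(T : V →ₗ[k] V), (T.symm : V →ₗ[k] V), by ext v; simp, by ext v; simp⟩ with hA0def
  have hA0 : ∀ x : N, A0 * pu x = pu ⟨g0 * x * g0⁻¹, hN.conj_mem x x.2 g0⟩ * A0 := by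
    intro x
    apply Units.ext
    simp only [Units.val_mul, hpuval]
    show (T : V →ₗ[k] V) * π x = π ⟨g0 * x * g0⁻¹, hN.conj_mem x x.2 g0⟩ * (T : V →ₗ[k] V)
    rw [Module.End.mul_eq_comp, Module.End.mul_eq_comp]
    exact hT x
  have hA0z := aux_conj_zpow hN pu g0 A0 hA0
  -- Schur element
  set S : (V →ₗ[k] V)ˣ := (pu en)⁻¹ * A0 ^ ((n : ℤ)) with hS
  have hScomm : ∀ x : N, S * pu x = pu x * S := by
    intro x
    have h1 := hA0z (n : ℤ) x
    have harg : (⟨g0 ^ (n:ℤ) * ↑x * (g0 ^ (n:ℤ))⁻¹, hN.conj_mem x x.2 _⟩ : N)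
        = en * x * en⁻¹ := by
      ext
      simp [hen]
    rw [harg, map_mul, map_mul, map_inv] at h1
    rw [hS, mul_assoc, h1]
    group
  obtain ⟨c, hc⟩ : ∃ c : k, ((S : (V →ₗ[k] V)ˣ) : V →ₗ[k] V) = c • LinearMap.id := by
    apply hschur
    intro x
    have h1 := congrArg Units.val (hScomm x)
    simp only [Units.val_mul, hpuval] at h1
    rw [← Module.End.mul_eq_comp, ← Module.End.mul_eq_comp]
    exact h1
  have hVnt : Nontrivial V := by
    have : Nontrivial π.asModule := IsSimpleModule.nontrivial (MonoidAlgebra k N) _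
    exact π.asModuleEquiv.toEquiv.symm.nontrivial
  have hc0 : c ≠ 0 := by
    intro h0
    obtain ⟨v, hv⟩ := exists_ne (0 : V)
    apply hv
    have h1 : (1 : V →ₗ[k] V) = ((S⁻¹ : (V →ₗ[k] V)ˣ) : V →ₗ[k] V) *
        ((S : (V →ₗ[k] V)ˣ) : V →ₗ[k] V) := by
      rw [← Units.val_mul, inv_mul_cancel, Units.val_one]
    have h2 := congrArg (fun f : V →ₗ[k] V => f v) h1
    simp only [Module.End.one_apply, Module.End.mul_apply] at h2
    rw [hc, h0, zero_smul] at h2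
    simpa using h2
  obtain ⟨d, hd⟩ := IsAlgClosed.exists_pow_nat_eq (c⁻¹) hnpos
  have hd0 : d ≠ 0 := by
    intro h0
    rw [h0, zero_pow hnpos.ne'] at hd
    exact inv_ne_zero hc0 hd.symm
  set D : (V →ₗ[k] V)ˣ :=
    ⟨d • 1, d⁻¹ • 1,
      by ext v; simp [smul_smul, mul_inv_cancel₀ hd0, inv_mul_cancel₀ hd0],
      by ext v; simp [smul_smul, mul_inv_cancel₀ hd0, inv_mul_cancel₀ hd0]⟩ with hD
  have hDcentral : ∀ u : (V →ₗ[k] V)ˣ, D * u = u * D := by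
    intro u
    apply Units.ext
    simp only [Units.val_mul, hD]
    ext v
    simp
  set A' : (V →ₗ[k] V)ˣ := D * A0 with hA'def
  have hA' : ∀ x : N, A' * pu x = pu ⟨g0 * x * g0⁻¹, hN.conj_mem x x.2 g0⟩ * A' := by
    intro x
    rw [hA'def, mul_assoc, hA0 x, ← mul_assoc, hDcentral, mul_assoc]
  have hA'z := aux_conj_zpow hN pu g0 A' hA'
  have hA'n : A' ^ ((n : ℤ)) = pu en := by
    have hA0n : ((A0 ^ ((n:ℤ)) : (V →ₗ[k] V)ˣ) : V →ₗ[k] V) = c • (π en) := by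
      have h2 : pu en * S = A0 ^ ((n:ℤ)) := by rw [hS]; group
      rw [← h2]
      simp only [Units.val_mul, hpuval, hc]
      ext v
      simp
    have hcomm : Commute D A0 := hDcentral A0
    apply Units.ext
    rw [hA'def, zpow_natCast, hcomm.mul_pow, Units.val_mul, ← zpow_natCast A0, hA0n, hpuval]
    have hDn : ((D ^ n : (V →ₗ[k] V)ˣ) : V →ₗ[k] V) = (d ^ n) • 1 := by
      rw [Units.val_pow_eq_pow_val, hD]
      simp [smul_pow]
    rw [hDn]
    ext v
    simp [smul_smul, hd, inv_mul_cancel₀ hc0, mul_inv_cancel₀ hc0]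
  -- exponent choice
  set m : G → ℤ := fun g => (Subgroup.mem_zpowers_iff.mp (hq ↑g)).choose with hm'
  have hm : ∀ g : G, q ^ (m g) = (g : G ⧸ N) := fun g =>
    (Subgroup.mem_zpowers_iff.mp (hq ↑g)).choose_spec
  -- key well-definedness
  have keyL : ∀ (s t : ℤ) (w : G) (hs : g0 ^ (-s) * w ∈ N) (ht : g0 ^ (-t) * w ∈ N),
      A' ^ s * pu ⟨g0 ^ (-s) * w, hs⟩ = A' ^ t * pu ⟨g0 ^ (-t) * w, ht⟩ := by
    intro s t w hs ht
    have hws : (w : G ⧸ N) = q ^ s := by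
      have h1 : q ^ (-s) * (w : G ⧸ N) = 1 := by
        rw [← hmkz]; exact QuotientGroup.eq_one_iff _ |>.mpr hs
      rw [zpow_neg] at h1
      exact (inv_mul_eq_one.mp h1).symm
    have hwt : (w : G ⧸ N) = q ^ t := by
      have h1 : q ^ (-t) * (w : G ⧸ N) = 1 := by
        rw [← hmkz]; exact QuotientGroup.eq_one_iff _ |>.mpr ht
      rw [zpow_neg] at h1
      exact (inv_mul_eq_one.mp h1).symm
    have h1 : q ^ (t - s) = 1 := by
      rw [zpow_sub, ← hws, ← hwt, mul_inv_cancel]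
    have h2 : ((n : ℤ)) ∣ (t - s) := orderOf_dvd_iff_zpow_eq_one.mpr h1
    obtain ⟨u, hu⟩ := h2
    have htu : t = s + (n : ℤ) * u := by omega
    have hpow : A' ^ t = A' ^ s * (pu en) ^ u := by
      rw [htu, zpow_add, zpow_mul, hA'n]
    rw [hpow, mul_assoc, ← map_zpow, ← map_mul]
    congr 2
    ext
    show (g0 ^ (-s) * w : G) = ((en ^ u : N) : G) * (g0 ^ (-t) * w)
    rw [SubgroupClass.coe_zpow]
    show (g0 ^ (-s) * w : G) = (g0 ^ ((n:ℤ))) ^ u * (g0 ^ (-t) * w)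
    rw [htu]
    group
  -- swap lemma
  have hswap : ∀ (t : ℤ) (x : N), pu x * A' ^ t =
      A' ^ t * pu ⟨g0 ^ (-t) * ↑x * (g0 ^ (-t))⁻¹, hN.conj_mem x x.2 _⟩ := by
    intro t x
    have h1 := hA'z t ⟨g0 ^ (-t) * ↑x * (g0 ^ (-t))⁻¹, hN.conj_mem x x.2 _⟩
    have harg : (⟨g0 ^ t * (g0 ^ (-t) * ↑x * (g0 ^ (-t))⁻¹) * (g0 ^ t)⁻¹,
        hN.conj_mem _ (hN.conj_mem x x.2 _) _⟩ : N) = x := by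
      ext
      show g0 ^ t * (g0 ^ (-t) * ↑x * (g0 ^ (-t))⁻¹) * (g0 ^ t)⁻¹ = ↑x
      group
    rw [harg] at h1
    rw [← h1]
  -- the extension
  set F : G → (V →ₗ[k] V)ˣ :=
    fun g => A' ^ (m g) * pu ⟨g0 ^ (-(m g)) * g, hmemN _ _ (hm g)⟩ with hF
  have hFmul : ∀ g h : G, F (g * h) = F g * F h := by
    intro g h
    have hmemgh : g0 ^ (-(m g + m h)) * (g * h) ∈ N := by
      apply hmemN
      rw [zpow_add, hm g, hm h, QuotientGroup.mk_mul]
    have e2 : (⟨g0 ^ (-(m h)) * (g0 ^ (-(m g)) * g) * (g0 ^ (-(m h)))⁻¹,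
          hN.conj_mem _ (hmemN _ _ (hm g)) _⟩ : N) * ⟨g0 ^ (-(m h)) * h, hmemN _ _ (hm h)⟩
        = ⟨g0 ^ (-(m g + m h)) * (g * h), hmemgh⟩ := by
      ext
      show (g0 ^ (-(m h)) * (g0 ^ (-(m g)) * g) * (g0 ^ (-(m h)))⁻¹) * (g0 ^ (-(m h)) * h)
        = g0 ^ (-(m g + m h)) * (g * h)
      group
    calc F (g * h)
        = A' ^ (m g + m h) * pu ⟨g0 ^ (-(m g + m h)) * (g * h), hmemgh⟩ :=
          keyL _ _ _ _ _
      _ = A' ^ (m g) * (A' ^ (m h) *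
            (pu ⟨g0 ^ (-(m h)) * (g0 ^ (-(m g)) * g) * (g0 ^ (-(m h)))⁻¹,
              hN.conj_mem _ (hmemN _ _ (hm g)) _⟩ *
             pu ⟨g0 ^ (-(m h)) * h, hmemN _ _ (hm h)⟩)) := by
          rw [← map_mul, e2, zpow_add]
          group
      _ = A' ^ (m g) * ((pu ⟨g0 ^ (-(m g)) * g, hmemN _ _ (hm g)⟩ * A' ^ (m h)) *
             pu ⟨g0 ^ (-(m h)) * h, hmemN _ _ (hm h)⟩) := by
          rw [hswap (m h)]
          group
      _ = F g * F h := by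
          rw [hF]
          group
  refine ⟨(Units.coeHom (V →ₗ[k] V)).comp (MonoidHom.mk' F hFmul), ?_⟩
  intro x
  show ((F ↑x : (V →ₗ[k] V)ˣ) : V →ₗ[k] V) = π x
  have h0 : q ^ (0 : ℤ) = ((x : G) : G ⧸ N) := by
    rw [zpow_zero]
    exact (QuotientGroup.eq_one_iff _ |>.mpr x.2).symm
  have h1 : F ↑x = A' ^ (0:ℤ) * pu ⟨g0 ^ (-(0:ℤ)) * ↑x, hmemN _ _ h0⟩ := keyL _ _ _ _ _
  have harg : (⟨g0 ^ (-(0:ℤ)) * ↑x, hmemN _ _ h0⟩ : N) = x := by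
    ext
    simp
  rw [h1, harg, zpow_zero, one_mul, hpuval]
end

section
/- Let K be a group, K' ⊴ K a normal subgroup of finite index, k a field, and π a k-representation of K (not necessarily of finite length) such that Res_{K'} of every irreducible subquotient of π is semisimple of finite length. If τ' is an irreducible subquotient of Res_{K'} π and π embeds into a direct sum ⊕_{i∈I} πᵢ of finite-length k[K]-modules, then there exists an irreducible subquotient τ of π such that τ' is a direct summand of Res_{K'} τ. -/
open scoped DirectSum

/-- `N` is a subquotient of `M` (as `R`-modules). -/
def IsSubquotient (R : Type*) [Ring R] (M : Type*) [AddCommGroup M] [Module R M]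
    (N : Type*) [AddCommGroup N] [Module R N] : Prop :=
  ∃ (W : Submodule R M) (U : Submodule R W), Nonempty ((↥W ⧸ U) ≃ₗ[R] N)

section Generic

variable {R : Type*} [Ring R] {A M C X : Type*}
  [AddCommGroup A] [AddCommGroup M] [AddCommGroup C] [AddCommGroup X]
  [Module R A] [Module R M] [Module R C] [Module R X]

theorem isSubquotient_of_le_range (f : A →ₗ[R] M) (hf : Function.Injective f)
    (W : Submodule R M) (hW : W ≤ LinearMap.range f) (U : Submodule R W)
    (e : (↥W ⧸ U) ≃ₗ[R] X) : IsSubquotient R A X := by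
  set W₀ := W.comap f with hW₀
  have hres : ∀ x ∈ W₀, f x ∈ W := fun x hx => hx
  set φ : ↥W₀ →ₗ[R] ↥W := f.restrict hres with hφ
  have hinj : Function.Injective φ := by
    intro a b hab
    ext
    exact hf (congrArg Subtype.val hab)
  have hsurj : Function.Surjective φ := by
    rintro ⟨m, hm⟩
    obtain ⟨a, rfl⟩ := hW hm
    exact ⟨⟨a, hm⟩, rfl⟩
  set eφ := LinearEquiv.ofBijective φ ⟨hinj, hsurj⟩ with heφ
  refine ⟨W₀, U.comap (eφ : ↥W₀ →ₗ[R] ↥W), ⟨(Submodule.Quotient.equiv _ U eφ ?_).trans e⟩⟩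
  exact Submodule.map_comap_eq_of_surjective hsurj U

theorem isSubquotient_of_injective (f : A →ₗ[R] M) (hf : Function.Injective f)
    (h : IsSubquotient R A X) : IsSubquotient R M X := by
  obtain ⟨W, U, ⟨e⟩⟩ := h
  set eW := Submodule.equivMapOfInjective f hf W with heW
  refine ⟨W.map f, U.map (eW : ↥W →ₗ[R] ↥(W.map f)), ⟨(Submodule.Quotient.equiv U _ eW rfl).symm.trans e⟩⟩

theorem isSubquotient_of_surjective (f : A →ₗ[R] M) (hf : Function.Surjective f)
    (h : IsSubquotient R M X) : IsSubquotient R A X := by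
  obtain ⟨W, U, ⟨e⟩⟩ := h
  set W₀ := W.comap f with hW₀
  set φ : ↥W₀ →ₗ[R] ↥W := f.restrict (fun x hx => hx) with hφ
  have hsurj : Function.Surjective φ := by
    rintro ⟨m, hm⟩
    obtain ⟨a, rfl⟩ := hf m
    exact ⟨⟨a, hm⟩, rfl⟩
  set ψ := U.mkQ.comp φ with hψ
  have hψs : Function.Surjective ψ := (Submodule.mkQ_surjective U).comp hsurj
  exact ⟨W₀, LinearMap.ker ψ, ⟨(ψ.quotKerEquivOfSurjective hψs).trans e⟩⟩

theorem isSubquotient_split (i : A →ₗ[R] M) (hi : Function.Injective i)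
    (p : M →ₗ[R] C)
    (hker : LinearMap.ker p ≤ LinearMap.range i) (hX : IsSimpleModule R X)
    (h : IsSubquotient R M X) : IsSubquotient R A X ∨ IsSubquotient R C X := by
  obtain ⟨W, U, ⟨e⟩⟩ := h
  set Ubar := U.map W.subtype with hUbar
  have hUbarW : Ubar ≤ W := by
    rintro x ⟨u, _, rfl⟩; exact u.2
  by_cases hcase : W ≤ Ubar ⊔ LinearMap.ker p
  · -- τ' is a subquotient of A
    left
    set A' := W ⊓ LinearMap.ker p with hA'
    have hA'le : A' ≤ LinearMap.range i := le_trans inf_le_right hker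
    have hle : A' ≤ W := inf_le_left
    set θ : ↥A' →ₗ[R] (↥W ⧸ U) := U.mkQ.comp (Submodule.inclusion hle) with hθ
    have hθs : Function.Surjective θ := by
      rw [← LinearMap.range_eq_top, ← top_le_iff]
      rintro z -
      obtain ⟨z, rfl⟩ := Submodule.mkQ_surjective U z
      obtain ⟨u, hu, v, hv, huv⟩ := Submodule.mem_sup.mp (hcase z.2)
      have hvW : v ∈ W := by
        have : v = (z : M) - u := by rw [← huv]; abel
        rw [this]
        exact W.sub_mem z.2 (hUbarW hu)
      have hv' : v ∈ A' := Submodule.mem_inf.mpr ⟨hvW, hv⟩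
      refine ⟨⟨v, hv'⟩, ?_⟩
      have hθv : θ ⟨v, hv'⟩ = Submodule.Quotient.mk (Submodule.inclusion hle ⟨v, hv'⟩) := rfl
      rw [hθv, Submodule.mkQ_apply, Submodule.Quotient.eq]
      obtain ⟨u', hu', hval⟩ := hu
      have hdiff : (Submodule.inclusion hle ⟨v, hv'⟩ : ↥W) - z = -u' := by
        ext
        show v - (z : M) = -(u' : M)
        have hval2 : (u' : M) = u := hval
        rw [hval2, ← huv]; abel
      rw [hdiff]
      exact U.neg_mem hu'
    exact isSubquotient_of_le_range i hi A' hA'le (LinearMap.ker θ)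
      ((θ.quotKerEquivOfSurjective hθs).trans e)
  · -- τ' is a subquotient of C
    right
    set Wstar := W.map p with hWstar
    set φ : ↥W →ₗ[R] ↥Wstar := p.restrict (fun x hx => Submodule.mem_map_of_mem hx) with hφ
    have hφs : Function.Surjective φ := by
      rintro ⟨c, z, hz, rfl⟩
      exact ⟨⟨z, hz⟩, rfl⟩
    set Ustar := U.map φ with hUstar
    set ψ := Ustar.mkQ.comp φ with hψ
    have hψs : Function.Surjective ψ := (Submodule.mkQ_surjective Ustar).comp hφs
    have hUker : U ≤ LinearMap.ker ψ := by
      intro u hu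
      show Submodule.Quotient.mk (φ u) = 0
      rw [Submodule.Quotient.mk_eq_zero]
      exact Submodule.mem_map_of_mem hu
    set ψbar := U.liftQ ψ hUker with hψbar
    have hψbars : Function.Surjective ψbar := by
      intro z
      obtain ⟨w, rfl⟩ := hψs z
      exact ⟨Submodule.Quotient.mk w, rfl⟩
    -- find an element with nonzero image
    obtain ⟨z₁, hz₁W, hz₁⟩ := SetLike.not_le_iff_exists.mp hcase
    have hz₁ne : ψ ⟨z₁, hz₁W⟩ ≠ 0 := by
      intro h0
      apply hz₁
      have : φ ⟨z₁, hz₁W⟩ ∈ Ustar := (Submodule.Quotient.mk_eq_zero _).mp h0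
      obtain ⟨u', hu', hval⟩ := this
      have hval' : p (u' : M) = p z₁ := by
        have h1 := congrArg Subtype.val hval
        simpa [hφ, LinearMap.restrict_coe_apply] using h1
      have hmem : z₁ - (u' : M) ∈ LinearMap.ker p := by
        rw [LinearMap.mem_ker, map_sub, hval', sub_self]
      refine Submodule.mem_sup.mpr ⟨(u' : M), Submodule.mem_map_of_mem hu', z₁ - (u' : M), hmem, ?_⟩
      abel
    haveI := hX; haveI : IsSimpleModule R (↥W ⧸ U) := IsSimpleModule.congr e
    have hker' : LinearMap.ker ψbar = ⊥ ∨ LinearMap.ker ψbar = ⊤ := eq_bot_or_eq_top _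
    rcases hker' with hker' | hker'
    · have hbij : Function.Bijective ψbar := ⟨LinearMap.ker_eq_bot.mp hker', hψbars⟩
      exact ⟨Wstar, Ustar, ⟨(LinearEquiv.ofBijective ψbar hbij).symm.trans e⟩⟩
    · exfalso
      apply hz₁ne
      have : Submodule.Quotient.mk (p := U) ⟨z₁, hz₁W⟩ ∈ LinearMap.ker ψbar := hker' ▸ Submodule.mem_top
      exact this

theorem subsingleton_of_isSubquotient [Subsingleton M] (h : IsSubquotient R M X) :
    Subsingleton X := by
  obtain ⟨W, U, ⟨e⟩⟩ := h
  haveI : Subsingleton ↥W := by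
    constructor; intro a b; ext; exact Subsingleton.elim _ _
  haveI : Subsingleton (↥W ⧸ U) := Quotient.instSubsingletonQuotient _
  exact e.symm.toEquiv.subsingleton

theorem isCompl_map_equiv (E : M ≃ₗ[R] C) {p q : Submodule R M} (h : IsCompl p q) :
    IsCompl (p.map (E : M →ₗ[R] C)) (q.map (E : M →ₗ[R] C)) :=
  (Submodule.orderIsoMapComap E).isCompl h

theorem exists_compl_summand_of_semisimple (hss : IsSemisimpleModule R M)
    (h : IsSubquotient R M X) :
    ∃ p q : Submodule R M, IsCompl p q ∧ Nonempty (p ≃ₗ[R] X) := by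
  obtain ⟨W, U, ⟨e⟩⟩ := h
  haveI := hss
  obtain ⟨Cc, hCc⟩ := exists_isCompl U
  have eC : (↥W ⧸ U) ≃ₗ[R] ↥Cc := Submodule.quotientEquivOfIsCompl U Cc hCc
  set p := Cc.map W.subtype with hp
  have ep : ↥p ≃ₗ[R] ↥Cc := (Submodule.equivMapOfInjective W.subtype W.injective_subtype Cc).symm
  obtain ⟨q, hq⟩ := exists_isCompl p
  exact ⟨p, q, hq, ⟨ep.trans (eC.symm.trans e)⟩⟩

end Generic

/-- Restriction functor from `k[K]`-modules to `k[K']`-modules for a subgroup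
`K' ≤ K`, i.e. restriction of representations of `K` to `K'`. -/
noncomputable def resFunctor (k : Type) [Field k] {K : Type} [Group K] (K' : Subgroup K) :
    CategoryTheory.Functor (ModuleCat (MonoidAlgebra k K)) (ModuleCat (MonoidAlgebra k K')) :=
  ModuleCat.restrictScalars (MonoidAlgebra.mapDomainRingHom k K'.subtype)

section ResHelpers

universe u v

variable {k : Type} [Field k] {K : Type} [Group K] (K' : Subgroup K)

/-- Restriction of a `k[K]`-linear map to a `k[K']`-linear map. -/
noncomputable def resLinearMap {M N : ModuleCat.{u} (MonoidAlgebra k K)}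
    (g : M →ₗ[MonoidAlgebra k K] N) :
    ((resFunctor k K').obj M) →ₗ[MonoidAlgebra k K'] ((resFunctor k K').obj N) :=
  ((resFunctor k K').map (ModuleCat.ofHom g : M ⟶ N)).hom

@[simp] theorem resLinearMap_apply {M N : ModuleCat.{u} (MonoidAlgebra k K)}
    (g : M →ₗ[MonoidAlgebra k K] N) (x : (resFunctor k K').obj M) :
    resLinearMap K' g x = g x := rfl

/-- Restriction of a `k[K]`-linear equivalence to a `k[K']`-linear equivalence. -/
noncomputable def resLinearEquiv {M N : ModuleCat.{u} (MonoidAlgebra k K)}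
    (e : M ≃ₗ[MonoidAlgebra k K] N) :
    ((resFunctor k K').obj M) ≃ₗ[MonoidAlgebra k K'] ((resFunctor k K').obj N) :=
  { resLinearMap K' e.toLinearMap with
    invFun := e.symm
    left_inv := e.left_inv
    right_inv := e.right_inv }

/-- Restriction of a `k[K]`-linear equivalence, across universes. -/
noncomputable def resLinearEquiv' {M : ModuleCat.{u} (MonoidAlgebra k K)}
    {N : ModuleCat.{v} (MonoidAlgebra k K)} (e : M ≃ₗ[MonoidAlgebra k K] N) :
    ((resFunctor k K').obj M) ≃ₗ[MonoidAlgebra k K'] ((resFunctor k K').obj N) where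
  toFun := e
  map_add' := e.map_add
  map_smul' := fun r x => e.map_smul (MonoidAlgebra.mapDomainRingHom k K'.subtype r) x
  invFun := e.symm
  left_inv := e.left_inv
  right_inv := e.right_inv

/-- Transfer the semisimplicity hypothesis across universes, using that every simple
module is isomorphic to a quotient of the ring by a maximal left ideal. -/
theorem ress_transfer
    (hress : ∀ σ : ModuleCat.{u} (MonoidAlgebra k K),
      IsSimpleModule (MonoidAlgebra k K) σ →
      IsSemisimpleModule (MonoidAlgebra k K') ((resFunctor k K').obj σ))
    (X : Type v) [AddCommGroup X] [Module (MonoidAlgebra k K) X]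
    (hX : IsSimpleModule (MonoidAlgebra k K) X) :
    IsSemisimpleModule (MonoidAlgebra k K')
      ((resFunctor k K').obj (ModuleCat.of (MonoidAlgebra k K) X)) := by
  obtain ⟨I, hI, ⟨eX⟩⟩ := isSimpleModule_iff_quot_maximal.mp hX
  set σ := ModuleCat.of (MonoidAlgebra k K) (ULift.{u} (MonoidAlgebra k K ⧸ I)) with hσdef
  have l : ULift.{u} (MonoidAlgebra k K ⧸ I) ≃ₗ[MonoidAlgebra k K] X :=
    ULift.moduleEquiv.trans eX.symm
  haveI := hX
  have hσ : IsSimpleModule (MonoidAlgebra k K) σ := IsSimpleModule.congr l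
  have hss := hress σ hσ
  have E := resLinearEquiv' K' (M := σ) (N := ModuleCat.of (MonoidAlgebra k K) X) l
  haveI : ComplementedLattice (Submodule (MonoidAlgebra k K')
      ((resFunctor k K').obj σ)) := hss.toComplementedLattice
  exact { toComplementedLattice := (Submodule.orderIsoMapComap E).complementedLattice }

/-- The conclusion predicate: `M` has a simple subquotient `W/U` whose restriction
contains `τ'` as a direct summand. -/
def Concl (τ' : ModuleCat.{v} (MonoidAlgebra k K')) (M : Type u)
    [AddCommGroup M] [Module (MonoidAlgebra k K) M] : Prop :=
  ∃ (W : Submodule (MonoidAlgebra k K) M) (U : Submodule (MonoidAlgebra k K) W),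
    IsSimpleModule (MonoidAlgebra k K) (↥W ⧸ U) ∧
    ∃ (p q : Submodule (MonoidAlgebra k K')
        ((resFunctor k K').obj (ModuleCat.of (MonoidAlgebra k K) (↥W ⧸ U)))),
      IsCompl p q ∧ Nonempty (p ≃ₗ[MonoidAlgebra k K'] τ')

theorem concl_of_quotEquiv (τ' : ModuleCat.{v} (MonoidAlgebra k K'))
    {M : Type u} [AddCommGroup M] [Module (MonoidAlgebra k K) M]
    (W : Submodule (MonoidAlgebra k K) M) (U : Submodule (MonoidAlgebra k K) W)
    {Q : Type u} [AddCommGroup Q] [Module (MonoidAlgebra k K) Q]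
    (eQ : (↥W ⧸ U) ≃ₗ[MonoidAlgebra k K] Q)
    (hQ : IsSimpleModule (MonoidAlgebra k K) Q)
    (p q : Submodule (MonoidAlgebra k K')
      ((resFunctor k K').obj (ModuleCat.of (MonoidAlgebra k K) Q)))
    (hpq : IsCompl p q) (epτ : Nonempty (p ≃ₗ[MonoidAlgebra k K'] τ')) :
    Concl K' τ' M := by
  haveI := hQ
  have hsimp : IsSimpleModule (MonoidAlgebra k K) (↥W ⧸ U) := IsSimpleModule.congr eQ
  set E := resLinearEquiv K' (M := ModuleCat.of (MonoidAlgebra k K) Q)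
    (N := ModuleCat.of (MonoidAlgebra k K) (↥W ⧸ U)) eQ.symm with hE
  obtain ⟨e0⟩ := epτ
  refine ⟨W, U, hsimp, p.map (E : _ →ₗ[MonoidAlgebra k K'] _),
    q.map (E : _ →ₗ[MonoidAlgebra k K'] _), isCompl_map_equiv E hpq,
    ⟨((Submodule.equivMapOfInjective E.toLinearMap
        E.injective p).symm).trans e0⟩⟩

theorem concl_of_injective (τ' : ModuleCat.{v} (MonoidAlgebra k K'))
    {M M' : Type u} [AddCommGroup M] [Module (MonoidAlgebra k K) M]
    [AddCommGroup M'] [Module (MonoidAlgebra k K) M']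
    (g : M →ₗ[MonoidAlgebra k K] M') (hg : Function.Injective g)
    (h : Concl K' τ' M) : Concl K' τ' M' := by
  obtain ⟨W, U, hsimp, p, q, hpq, epτ⟩ := h
  set eW := Submodule.equivMapOfInjective g hg W with heW
  set U₂ := U.map (eW : ↥W →ₗ[MonoidAlgebra k K] ↥(W.map g)) with hU₂
  have eQ : (↥(W.map g) ⧸ U₂) ≃ₗ[MonoidAlgebra k K] (↥W ⧸ U) :=
    (Submodule.Quotient.equiv U U₂ eW rfl).symm
  exact concl_of_quotEquiv K' τ' (W.map g) U₂ eQ hsimp p q hpq epτ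

end ResHelpers



section LemA

universe u v

theorem lemA {k : Type} [Field k] {K : Type} [Group K] (K' : Subgroup K)
    (hress : ∀ (X : Type u) [AddCommGroup X] [Module (MonoidAlgebra k K) X],
      IsSimpleModule (MonoidAlgebra k K) X →
      IsSemisimpleModule (MonoidAlgebra k K')
        ((resFunctor k K').obj (ModuleCat.of (MonoidAlgebra k K) X)))
    (τ' : ModuleCat.{v} (MonoidAlgebra k K'))
    (hτ' : IsSimpleModule (MonoidAlgebra k K') τ')
    (M : Type u) [AddCommGroup M] [Module (MonoidAlgebra k K) M]
    (hM : IsFiniteLength (MonoidAlgebra k K) M)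
    (hsub : IsSubquotient (MonoidAlgebra k K')
      ((resFunctor k K').obj (ModuleCat.of (MonoidAlgebra k K) M)) τ') :
    Concl K' τ' M := by
  revert hsub
  induction hM with
  | of_subsingleton =>
    rename_i V instV1 instV2 instSub
    intro hsub
    haveI : Subsingleton ((resFunctor k K').obj
        (ModuleCat.of (MonoidAlgebra k K) V)) := instSub
    haveI := hτ'
    haveI : Nontrivial τ' := IsSimpleModule.nontrivial (MonoidAlgebra k K') τ'
    exact absurd (subsingleton_of_isSubquotient hsub) (not_subsingleton _)
  | of_simple_quotient hN ih =>
    rename_i V instV1 instV2 N hQsimple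
    intro hsub
    set i := resLinearMap K' (M := ModuleCat.of (MonoidAlgebra k K) ↥N)
      (N := ModuleCat.of (MonoidAlgebra k K) V) N.subtype with hi_def
    set pq := resLinearMap K' (M := ModuleCat.of (MonoidAlgebra k K) V)
      (N := ModuleCat.of (MonoidAlgebra k K) (V ⧸ N)) N.mkQ with hpq_def
    have hi : Function.Injective i := fun a b h => N.injective_subtype h
    have hker : LinearMap.ker pq ≤ LinearMap.range i := by
      intro x hx
      have hx0 : N.mkQ (show V from x) = 0 := hx
      have hxN : (show V from x) ∈ N := by
        rwa [← Submodule.ker_mkQ N, LinearMap.mem_ker]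
      exact ⟨⟨show V from x, hxN⟩, rfl⟩
    rcases isSubquotient_split i hi pq hker hτ' hsub with hA | hC
    · exact concl_of_injective K' τ' N.subtype N.injective_subtype (ih hA)
    · haveI := hQsimple
      have hss := hress (V ⧸ N) hQsimple
      obtain ⟨p, q, hpq2, epτ⟩ := exists_compl_summand_of_semisimple hss hC
      set U : Submodule (MonoidAlgebra k K) ↥(⊤ : Submodule (MonoidAlgebra k K) V) :=
        N.comap (⊤ : Submodule (MonoidAlgebra k K) V).subtype with hU_def
      have hmap : U.map ((Submodule.topEquiv :
          ↥(⊤ : Submodule (MonoidAlgebra k K) V) ≃ₗ[MonoidAlgebra k K] V) :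
          ↥(⊤ : Submodule (MonoidAlgebra k K) V) →ₗ[MonoidAlgebra k K] V) = N := by
        ext x
        constructor
        · rintro ⟨y, hy, rfl⟩; exact hy
        · intro hx; exact ⟨⟨x, trivial⟩, hx, rfl⟩
      have eQQ : (↥(⊤ : Submodule (MonoidAlgebra k K) V) ⧸ U) ≃ₗ[MonoidAlgebra k K]
          (V ⧸ N) := Submodule.Quotient.equiv U N Submodule.topEquiv hmap
      exact concl_of_quotEquiv K' τ' ⊤ U eQQ hQsimple p q hpq2 epτ

end LemA

set_option maxHeartbeats 4000000 in
/-- let `K' ⊴ K` be of finite index and `k` a field.  Let `π` be a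
`k`-representation of `K` (i.e. a `k[K]`-module) such that the restriction to `K'`
of every irreducible `k[K]`-module is semisimple of finite length, and suppose `π`
embeds into a direct sum of finite-length `k[K]`-modules.  If `τ'` is an irreducible
subquotient of `Res_{K'} π`, then there is an irreducible subquotient `W/U` of `π`
such that `τ'` is a direct summand of `Res_{K'}(W/U)`. -/
theorem stmt7 {k : Type} [Field k] {K : Type} [Group K]
    (K' : Subgroup K) [K'.Normal] [K'.FiniteIndex]
    (π : ModuleCat (MonoidAlgebra k K))
    (hress : ∀ σ : ModuleCat (MonoidAlgebra k K), IsSimpleModule (MonoidAlgebra k K) σ →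
      IsSemisimpleModule (MonoidAlgebra k K') ((resFunctor k K').obj σ) ∧
        IsFiniteLength (MonoidAlgebra k K') ((resFunctor k K').obj σ))
    (hemb : ∃ (ι : Type) (M : ι → ModuleCat (MonoidAlgebra k K)),
      (∀ i, IsFiniteLength (MonoidAlgebra k K) (M i)) ∧
      ∃ f : π →ₗ[MonoidAlgebra k K] (⨁ i, M i), Function.Injective f)
    (τ' : ModuleCat (MonoidAlgebra k K'))
    (hτ' : IsSimpleModule (MonoidAlgebra k K') τ')
    (hsubq : IsSubquotient (MonoidAlgebra k K') ((resFunctor k K').obj π) τ') :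
    ∃ (W : Submodule (MonoidAlgebra k K) π) (U : Submodule (MonoidAlgebra k K) W),
      IsSimpleModule (MonoidAlgebra k K) (↥W ⧸ U) ∧
      ∃ (p q : Submodule (MonoidAlgebra k K')
          ((resFunctor k K').obj (ModuleCat.of (MonoidAlgebra k K) (↥W ⧸ U)))),
        IsCompl p q ∧ Nonempty (p ≃ₗ[MonoidAlgebra k K'] τ') := by
  classical
  have hress1 : ∀ σ : ModuleCat (MonoidAlgebra k K),
      IsSimpleModule (MonoidAlgebra k K) σ →
      IsSemisimpleModule (MonoidAlgebra k K') ((resFunctor k K').obj σ) :=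
    fun σ hσ => (hress σ hσ).1
  obtain ⟨ι, Mi, hfin, f, hf⟩ := hemb
  obtain ⟨W', V', ⟨e'⟩⟩ := hsubq
  haveI := hτ'
  haveI : Nontrivial τ' := IsSimpleModule.nontrivial (MonoidAlgebra k K') τ'
  haveI : Nontrivial (↥W' ⧸ V') := e'.toEquiv.nontrivial
  obtain ⟨y, hy⟩ := exists_ne (0 : ↥W' ⧸ V')
  obtain ⟨x, rfl⟩ := Submodule.Quotient.mk_surjective V' y
  set w : ↥π := (show ↥π from (↑x : ↥((resFunctor k K').obj π))) with hw
  set N : Submodule (MonoidAlgebra k K) ↥π :=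
    Submodule.span (MonoidAlgebra k K) {w} with hN
  have hwN : w ∈ N := Submodule.mem_span_singleton_self w
  -- `N` has finite length
  haveI : ∀ i, ∀ z : ↥(Mi i), Decidable (z ≠ 0) := fun _ _ => Classical.dec _
  set s := (f w).support with hs
  haveI : ∀ j : s, IsNoetherian (MonoidAlgebra k K) ↥(Mi j) := fun j =>
    (isFiniteLength_iff_isNoetherian_isArtinian.mp (hfin j)).1
  haveI : ∀ j : s, IsArtinian (MonoidAlgebra k K) ↥(Mi j) := fun j =>
    (isFiniteLength_iff_isNoetherian_isArtinian.mp (hfin j)).2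
  set Φ : (⨁ i, ↥(Mi i)) →ₗ[MonoidAlgebra k K] (∀ j : s, ↥(Mi j)) :=
    LinearMap.pi (fun j => DirectSum.component (MonoidAlgebra k K) ι
      (fun i => ↥(Mi i)) (j : ι)) with hΦ
  set g : ↥N →ₗ[MonoidAlgebra k K] (∀ j : s, ↥(Mi j)) :=
    (Φ.comp f).comp N.subtype with hg_def
  have hg : Function.Injective g := by
    rw [← LinearMap.ker_eq_bot, eq_bot_iff]
    rintro v hv
    have hvN : (v : ↥π) ∈ N := v.2
    obtain ⟨r, hr⟩ := Submodule.mem_span_singleton.mp hvN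
    have hfv : f (v : ↥π) = r • f w := by rw [← hr, map_smul]
    have hgv : Φ (f (v : ↥π)) = 0 := hv
    have hzero : f (v : ↥π) = 0 := by
      refine DFinsupp.ext fun j => ?_
      by_cases hj : j ∈ s
      · have h1 := congrFun hgv ⟨j, hj⟩
        exact h1
      · have hj0 : (f w) j = 0 := DFinsupp.notMem_support_iff.mp hj
        rw [hfv]
        show (r • f w) j = 0
        rw [DFinsupp.smul_apply, hj0, smul_zero]
    have hv0 : (v : ↥π) = 0 := hf (by rw [hzero, map_zero])
    exact Submodule.mem_bot _ |>.mpr (Subtype.ext hv0)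
  have hNfl : IsFiniteLength (MonoidAlgebra k K) ↥N :=
    isFiniteLength_iff_isNoetherian_isArtinian.mpr
      ⟨isNoetherian_of_injective g hg, isArtinian_of_injective g hg⟩
  -- `τ'` is a subquotient of the restriction of `N`
  set iN := resLinearMap K' (M := ModuleCat.of (MonoidAlgebra k K) ↥N) (N := π)
    N.subtype with hiN
  have hiNinj : Function.Injective iN := fun a b h => N.injective_subtype h
  set A := LinearMap.range iN ⊓ W' with hA
  have hAW : A ≤ W' := inf_le_right
  set θ : ↥A →ₗ[MonoidAlgebra k K'] (↥W' ⧸ V') :=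
    V'.mkQ.comp (Submodule.inclusion hAW) with hθ
  have hwA : (↑x : ↥((resFunctor k K').obj π)) ∈ A :=
    Submodule.mem_inf.mpr ⟨⟨⟨w, hwN⟩, hw⟩, x.2⟩
  have hθx : θ ⟨↑x, hwA⟩ = Submodule.Quotient.mk x := rfl
  haveI : IsSimpleModule (MonoidAlgebra k K') (↥W' ⧸ V') := IsSimpleModule.congr e'
  have hθs : Function.Surjective θ := by
    rw [← LinearMap.range_eq_top]
    rcases eq_bot_or_eq_top (LinearMap.range θ) with hb | ht
    · exfalso
      apply hy
      have hmem : θ ⟨↑x, hwA⟩ ∈ LinearMap.range θ := LinearMap.mem_range_self θ _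
      rw [hb, Submodule.mem_bot] at hmem
      rw [← hθx, hmem]
    · exact ht
  have hsubN : IsSubquotient (MonoidAlgebra k K')
      ((resFunctor k K').obj (ModuleCat.of (MonoidAlgebra k K) ↥N)) τ' :=
    isSubquotient_of_le_range iN hiNinj A inf_le_left (LinearMap.ker θ)
      ((θ.quotKerEquivOfSurjective hθs).trans e')
  have hress2 : ∀ (X : Type _) [AddCommGroup X] [Module (MonoidAlgebra k K) X],
      IsSimpleModule (MonoidAlgebra k K) X →
      IsSemisimpleModule (MonoidAlgebra k K')
        ((resFunctor k K').obj (ModuleCat.of (MonoidAlgebra k K) X)) := by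
    intro X _ _ hX
    exact ress_transfer K' hress1 X hX
  have hconc := lemA K' hress2 τ' hτ' ↥N hNfl hsubN
  exact concl_of_injective K' τ' N.subtype N.injective_subtype hconc
end

section
/- Let G be a group, H an open (finite-index) subgroup containing a normal subgroup N of G with G/N abelian, k a field, and ρ₁ a k-representation of H such that π = Ind_H^G ρ₁ is irreducible. Then Res_{H} π contains ρ₁ as a direct summand, and the multiplicity of any irreducible constituent ρ' of Res_N ρ₁ in Res_N π equals [S : H], where S = {g ∈ G : (ρ')ᵍ ≅ ρ'} is the G-stabilizer (up to isomorphism) of ρ' — assuming Res_N π is semisimple. -/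
open Pointwise DirectSum
open scoped DirectSum

namespace Paper

variable {k : Type} [Field k] {G : Type} [Group G]
variable {V : Type} [AddCommGroup V] [Module k V]

/-- The space of the compactly induced representation `ind_H^G ρ`:
functions `f : G → V` with `f (h * x) = ρ h (f x)` supported on finitely many cosets. -/
def cInd (H : Subgroup G) (ρ : Representation k H V) : Submodule k (G → V) where
  carrier := {f | (∀ (h : H) (x : G), f (↑h * x) = ρ h (f x)) ∧
      ∃ S : Set G, S.Finite ∧ Function.support f ⊆ (H : Set G) * S}
  add_mem' := by
    rintro f g ⟨hf, Sf, hSf, hsf⟩ ⟨hg, Sg, hSg, hsg⟩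
    refine ⟨fun h x => by simp [hf h x, hg h x], Sf ∪ Sg, hSf.union hSg, ?_⟩
    refine (Function.support_add f g).trans ?_
    rw [Set.mul_union]
    exact Set.union_subset_union hsf hsg
  zero_mem' := ⟨fun h x => by simp, ∅, Set.finite_empty, by simp⟩
  smul_mem' := by
    rintro c f ⟨hf, S, hS, hs⟩
    exact ⟨fun h x => by simp [hf h x], S, hS,
      (Function.support_const_smul_subset c f).trans hs⟩

/-- Right translation action on `cInd H ρ`. -/
def cIndAct (H : Subgroup G) (ρ : Representation k H V) (z : G) :
    cInd H ρ →ₗ[k] cInd H ρ where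
  toFun f := ⟨fun x => (f : G → V) (x * z), by
    obtain ⟨hf, S, hS, hs⟩ := f.2
    refine ⟨fun h x => by simpa [mul_assoc] using hf h (x * z),
      S * {z⁻¹}, hS.mul (Set.finite_singleton _), ?_⟩
    intro x hx
    have hx' : (f : G → V) (x * z) ≠ 0 := hx
    rcases hs hx' with ⟨h, hh, s, hsS, heq⟩
    refine ⟨h, hh, s * z⁻¹, Set.mul_mem_mul hsS rfl, ?_⟩
    have : h * s = x * z := heq
    calc h * (s * z⁻¹) = h * s * z⁻¹ := by rw [mul_assoc]
      _ = x * z * z⁻¹ := by rw [this]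
      _ = x := by simp⟩
  map_add' f g := by ext x; rfl
  map_smul' c f := by ext x; rfl

/-- The compactly induced representation of `G` on `cInd H ρ`, by right translation. -/
def cIndRep (H : Subgroup G) (ρ : Representation k H V) :
    Representation k G (cInd H ρ) where
  toFun := cIndAct H ρ
  map_one' := by
    refine LinearMap.ext fun f => Subtype.ext (funext fun x => ?_)
    simp [cIndAct]
  map_mul' z w := by
    refine LinearMap.ext fun f => Subtype.ext (funext fun x => ?_)
    simp [cIndAct, mul_assoc]

/-- The conjugate subgroup `g H g⁻¹`. -/
def conjSubgroup (g : G) (H : Subgroup G) : Subgroup G where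
  carrier := {x | g⁻¹ * x * g ∈ H}
  one_mem' := by simpa using H.one_mem
  mul_mem' := by
    intro a b ha hb
    have h : g⁻¹ * (a * b) * g = (g⁻¹ * a * g) * (g⁻¹ * b * g) := by group
    simp only [Set.mem_setOf_eq] at *
    rw [h]; exact mul_mem ha hb
  inv_mem' := by
    intro a ha
    simp only [Set.mem_setOf_eq] at *
    have h : g⁻¹ * a⁻¹ * g = (g⁻¹ * a * g)⁻¹ := by group
    rw [h]; exact inv_mem ha

lemma conjSubgroup_mono (g : G) {H K : Subgroup G} (h : H ≤ K) :
    conjSubgroup g H ≤ conjSubgroup g K := fun _ hx => h hx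

/-- The isomorphism `g H g⁻¹ → H`, `x ↦ g⁻¹ x g`. -/
def conjHom (g : G) (H : Subgroup G) : conjSubgroup g H →* H where
  toFun x := ⟨g⁻¹ * x * g, x.2⟩
  map_one' := by
    ext
    show g⁻¹ * 1 * g = 1
    group
  map_mul' x y := by
    ext
    show g⁻¹ * (↑x * ↑y) * g = (g⁻¹ * ↑x * g) * (g⁻¹ * ↑y * g)
    group

/-- The conjugate representation `ρᵍ` of `g H g⁻¹`, given by `ρᵍ(x) = ρ(g⁻¹ x g)`. -/
def conjRep (g : G) {H : Subgroup G} (ρ : Representation k H V) :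
    Representation k (conjSubgroup g H) V :=
  ρ.comp (conjHom g H)

/-- Subrepresentation on an invariant submodule. -/
def subRep {Γ : Type} [Group Γ] (ρ : Representation k Γ V) (p : Submodule k V)
    (hp : ∀ (g : Γ) (v : V), v ∈ p → ρ g v ∈ p) : Representation k Γ p where
  toFun g := (ρ g).restrict (fun v hv => hp g v hv)
  map_one' := by
    refine LinearMap.ext fun v => Subtype.ext ?_
    simp [LinearMap.restrict_apply]
  map_mul' g h := by
    refine LinearMap.ext fun v => Subtype.ext ?_
    simp [LinearMap.restrict_apply, map_mul]

/-- `N` is a subquotient of `M` (as `R`-modules). -/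
def IsSubquotient (R : Type*) [Ring R] (M : Type*) [AddCommGroup M] [Module R M]
    (N : Type*) [AddCommGroup N] [Module R N] : Prop :=
  ∃ (W : Submodule R M) (U : Submodule R W), Nonempty ((↥W ⧸ U) ≃ₗ[R] N)

/-- direct sum of a family of representations -/
def dsRep {ι : Type} {Γ : Type} [Group Γ] {W : ι → Type}
    [∀ i, AddCommGroup (W i)] [∀ i, Module k (W i)]
    (ρ : ∀ i, Representation k Γ (W i)) : Representation k Γ (⨁ i, W i) where
  toFun g := DFinsupp.mapRange.linearMap (fun i => ρ i g)
  map_one' := by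
    simp only [map_one]
    exact DFinsupp.mapRange.linearMap_id
  map_mul' g h := by
    simp only [map_mul]
    exact DFinsupp.mapRange.linearMap_comp _ _

/-- stabilizer of a subspace -/
def stab (ρ : Representation k G V) (p : Submodule k V) : Subgroup G where
  carrier := {g | Submodule.map (ρ g) p = p}
  one_mem' := by
    show Submodule.map (ρ 1) p = p
    rw [map_one, Module.End.one_eq_id, Submodule.map_id]
  mul_mem' := by
    intro a b ha hb
    simp only [Set.mem_setOf_eq] at *
    rw [map_mul, Module.End.mul_eq_comp, Submodule.map_comp, hb, ha]
  inv_mem' := by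
    intro a ha
    simp only [Set.mem_setOf_eq] at *
    conv_lhs => rw [← ha]
    rw [← Submodule.map_comp, ← Module.End.mul_eq_comp, ← map_mul, inv_mul_cancel, map_one,
      Module.End.one_eq_id, Submodule.map_id]

lemma stab_mem {ρ : Representation k G V} {p : Submodule k V} {g : G}
    (hg : g ∈ stab ρ p) {v : V} (hv : v ∈ p) : ρ g v ∈ p :=
  hg ▸ Submodule.mem_map_of_mem hv

/-- twist of a representation by a character -/
def twist (ρ : Representation k G V) (χ : G →* kˣ) : Representation k G V where
  toFun g := (χ g : k) • ρ g
  map_one' := by simp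
  map_mul' g h := by
    simp only [map_mul, Units.val_mul]
    rw [smul_mul_smul_comm]


/-- Restriction of a representation to a subgroup. -/
def resRep (H : Subgroup G) (ρ : Representation k G V) : Representation k H V :=
  ρ.comp H.subtype

end Paper

open Paper


namespace Stmt9Aux

open Representation

variable {k : Type} [Field k] {Γ : Type} [Group Γ]
variable {V : Type} [AddCommGroup V] [Module k V]
variable {V₂ : Type} [AddCommGroup V₂] [Module k V₂]

theorem smul_def (ρ : Representation k Γ V) (a : MonoidAlgebra k Γ) (x : ρ.asModule) :
    a • x = ρ.asAlgebraHom a x := rfl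

theorem of_smul (ρ : Representation k Γ V) (g : Γ) (x : ρ.asModule) :
    (MonoidAlgebra.of k Γ g) • x = ρ g x := by
  rw [smul_def, Representation.asAlgebraHom_of]

theorem single_one_smul (ρ : Representation k Γ V) (c : k) (v : ρ.asModule) :
    (MonoidAlgebra.single (1 : Γ) c : MonoidAlgebra k Γ) • v = c • v := by
  rw [smul_def, asAlgebraHom_single, map_one]; rfl

/-- An equivariant `k`-linear map induces a `MonoidAlgebra`-linear map. -/
def eqvHom (ρ : Representation k Γ V) (τ : Representation k Γ V₂) (φ : V →ₗ[k] V₂)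
    (h : ∀ (g : Γ) (v : V), φ (ρ g v) = τ g (φ v)) :
    ρ.asModule →ₗ[MonoidAlgebra k Γ] τ.asModule where
  toFun := φ
  map_add' := φ.map_add
  map_smul' a x := by
    show φ (ρ.asAlgebraHom a x) = τ.asAlgebraHom a (φ x)
    induction a using MonoidAlgebra.induction_on with
    | of g => rw [asAlgebraHom_of, asAlgebraHom_of]; exact h g x
    | add a b ha hb =>
        rw [map_add, map_add]
        exact (φ.map_add (ρ.asAlgebraHom a x) (ρ.asAlgebraHom b x)).trans (congrArg₂ (· + ·) ha hb)
    | smul r a ha =>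
        rw [map_smul, map_smul]
        exact (φ.map_smul r (ρ.asAlgebraHom a x)).trans (congrArg (r • ·) ha)

@[simp] theorem eqvHom_apply (ρ : Representation k Γ V) (τ : Representation k Γ V₂)
    (φ : V →ₗ[k] V₂) (h) (v : ρ.asModule) : eqvHom ρ τ φ h v = φ v := rfl

/-- A `ρ`-invariant `k`-submodule as a `MonoidAlgebra`-submodule. -/
def toMA (ρ : Representation k Γ V) (p : Submodule k V)
    (hp : ∀ (g : Γ) (v : V), v ∈ p → ρ g v ∈ p) :
    Submodule (MonoidAlgebra k Γ) ρ.asModule where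
  carrier := show Set ρ.asModule from (p : Set V)
  add_mem' := p.add_mem
  zero_mem' := p.zero_mem
  smul_mem' a v hv := by
    show ρ.asAlgebraHom a v ∈ p
    induction a using MonoidAlgebra.induction_on with
    | of g => rw [asAlgebraHom_of]; exact hp g v hv
    | add a b ha hb => rw [map_add]; exact p.add_mem ha hb
    | smul r a ha => rw [map_smul]; exact p.smul_mem r ha

theorem mem_toMA {ρ : Representation k Γ V} {p : Submodule k V} {hp} {v : ρ.asModule} :
    v ∈ toMA ρ p hp ↔ v ∈ p := ⟨fun h => h, fun h => h⟩

/-- A `MonoidAlgebra`-submodule as a `k`-submodule. -/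
def toK (ρ : Representation k Γ V) (q : Submodule (MonoidAlgebra k Γ) ρ.asModule) :
    Submodule k V where
  carrier := show Set V from (q : Set ρ.asModule)
  add_mem' := q.add_mem
  zero_mem' := q.zero_mem
  smul_mem' c v hv := by
    show c • v ∈ (q : Set ρ.asModule)
    let vM : ρ.asModule := v
    have h : (c • v : V) = (MonoidAlgebra.single (1 : Γ) c : MonoidAlgebra k Γ) • vM :=
      (single_one_smul ρ c vM).symm
    rw [h]
    exact q.smul_mem _ hv

theorem mem_toK {ρ : Representation k Γ V} {q : Submodule (MonoidAlgebra k Γ) ρ.asModule}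
    {v : V} : v ∈ toK ρ q ↔ (v : ρ.asModule) ∈ q := ⟨fun h => h, fun h => h⟩

theorem toK_invt (ρ : Representation k Γ V) (q : Submodule (MonoidAlgebra k Γ) ρ.asModule)
    (g : Γ) (v : V) (hv : v ∈ toK ρ q) : ρ g v ∈ toK ρ q := by
  let vM : ρ.asModule := v
  have h : ρ g v = (MonoidAlgebra.of k Γ g) • vM := (of_smul ρ g vM).symm
  rw [mem_toK, h]
  exact q.smul_mem _ hv

theorem isCompl_of {R M : Type*} [Semiring R] [AddCommMonoid M] [Module R M]
    (p q : Submodule R M) (h1 : ∀ v, v ∈ p → v ∈ q → v = 0)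
    (h2 : ∀ v : M, ∃ a ∈ p, ∃ b ∈ q, a + b = v) : IsCompl p q := by
  constructor
  · rw [disjoint_iff]
    ext v
    simp only [Submodule.mem_inf, Submodule.mem_bot]
    exact ⟨fun ⟨h, h'⟩ => h1 v h h', fun h => by subst h; exact ⟨p.zero_mem, q.zero_mem⟩⟩
  · rw [codisjoint_iff, eq_top_iff]
    intro v _
    obtain ⟨a, ha, b, hb, hab⟩ := h2 v
    rw [← hab]
    exact Submodule.add_mem_sup ha hb

theorem inj_of_ker {R M X : Type*} [Ring R] [AddCommMonoid M] [Module R M]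
    [AddCommMonoid X] [Module R X] (F : M →ₗ[R] X) (h : ∀ u, F u = 0 → u = 0) :
    Function.Injective F := by
  have hneg : ∀ b : M, b + (-1 : R) • b = 0 := fun b => by
    calc b + (-1 : R) • b = (1 + -1 : R) • b := by rw [add_smul, one_smul]
      _ = 0 := by rw [add_neg_cancel, zero_smul]
  intro a b hab
  have h1 : F (a + (-1 : R) • b) = 0 := by
    rw [map_add, hab, ← map_add, hneg, map_zero]
  have h2 := h _ h1
  calc a = a + (b + (-1 : R) • b) := by rw [hneg, add_zero]
    _ = b + (a + (-1 : R) • b) := by rw [← add_assoc, ← add_assoc, add_comm a b]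
    _ = b := by rw [h2, add_zero]

theorem isSimple_congr (ρ τ : Representation k Γ V)
    (h2 : ∀ (p : Submodule k V), (∀ g v, v ∈ p → τ g v ∈ p) → ∀ g v, v ∈ p → ρ g v ∈ p)
    (hρ : IsSimpleModule (MonoidAlgebra k Γ) ρ.asModule) :
    IsSimpleModule (MonoidAlgebra k Γ) τ.asModule := by
  haveI := hρ
  haveI : Nontrivial ρ.asModule := IsSimpleModule.nontrivial (MonoidAlgebra k Γ) ρ.asModule
  obtain ⟨v, w, hvw⟩ := (inferInstance : Nontrivial ρ.asModule)
  haveI hnt : Nontrivial (Submodule (MonoidAlgebra k Γ) τ.asModule) := by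
    refine ⟨⊥, ⊤, fun h => hvw ?_⟩
    let vM : τ.asModule := v
    let wM : τ.asModule := w
    have hv : vM ∈ (⊥ : Submodule (MonoidAlgebra k Γ) τ.asModule) := by rw [h]; trivial
    have hw : wM ∈ (⊥ : Submodule (MonoidAlgebra k Γ) τ.asModule) := by rw [h]; trivial
    rw [Submodule.mem_bot] at hv hw
    show vM = wM
    rw [hv, hw]
  refine { eq_bot_or_eq_top := fun W' => ?_ }
  · set pk : Submodule k V := toK τ W' with hpk
    have hτinv : ∀ g v, v ∈ pk → τ g v ∈ pk := toK_invt τ W'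
    have hρinv : ∀ g v, v ∈ pk → ρ g v ∈ pk := h2 pk hτinv
    have hmem : ∀ u : V, (u ∈ W') ↔ u ∈ toMA ρ pk hρinv := fun u => Iff.rfl
    rcases eq_bot_or_eq_top (toMA ρ pk hρinv) with h | h
    · left
      rw [Submodule.eq_bot_iff] at h ⊢
      exact fun u hu => h u ((hmem u).1 hu)
    · right
      rw [Submodule.eq_top_iff'] at h ⊢
      exact fun u => (hmem u).2 (h u)

/-- A `MonoidAlgebra`-linear map between `asModule`s as a `k`-linear map. -/
noncomputable def maToK (ρ : Representation k Γ V) (τ : Representation k Γ V₂)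
    (f : ρ.asModule →ₗ[MonoidAlgebra k Γ] τ.asModule) : V →ₗ[k] V₂ where
  toFun v := f v
  map_add' := f.map_add
  map_smul' c v := by
    simp only [RingHom.id_apply]
    have := f.map_smul (MonoidAlgebra.single (1 : Γ) c : MonoidAlgebra k Γ) v
    exact (congrArg f (single_one_smul ρ c (show ρ.asModule from v)).symm).trans
      (this.trans (single_one_smul τ c (f v)))

theorem maToK_comm (ρ : Representation k Γ V) (τ : Representation k Γ V₂)
    (f : ρ.asModule →ₗ[MonoidAlgebra k Γ] τ.asModule) (g : Γ) (v : V) :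
    maToK ρ τ f (ρ g v) = τ g (maToK ρ τ f v) := by
  show f (ρ g v) = τ g (f v)
  have := f.map_smul (MonoidAlgebra.of k Γ g) v
  exact (congrArg f (of_smul ρ g (show ρ.asModule from v)).symm).trans
    (this.trans (of_smul τ g (f v)))

end Stmt9Aux

namespace Stmt9Aux

open Paper

section CInd

variable {k : Type} [Field k] {G : Type} [Group G]
variable {W : Type} [AddCommGroup W] [Module k W]
variable (H : Subgroup G) (ρ₁ : Representation k H W)

/-- Functions in `cInd` supported inside `U`. -/
def suppSub (U : Set G) : Submodule k (cInd H ρ₁) where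
  carrier := {f | ∀ x : G, x ∉ U → (f : G → W) x = 0}
  add_mem' := by
    intro a b ha hb x hx
    show ((a : G → W) + (b : G → W)) x = 0
    simp [ha x hx, hb x hx]
  zero_mem' := fun x _ => rfl
  smul_mem' := by
    intro c f hf x hx
    show (c • (f : G → W)) x = 0
    simp [hf x hx]

theorem mem_suppSub {U : Set G} {f : cInd H ρ₁} :
    f ∈ suppSub H ρ₁ U ↔ ∀ x : G, x ∉ U → (f : G → W) x = 0 := Iff.rfl

theorem cInd_spec (f : cInd H ρ₁) (h : H) (x : G) :
    (f : G → W) (↑h * x) = ρ₁ h ((f : G → W) x) := f.2.1 h x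

theorem res_apply (Γ' : Subgroup G) (γ : Γ') (f : cInd H ρ₁) (x : G) :
    ((resRep Γ' (cIndRep H ρ₁) γ f : cInd H ρ₁) : G → W) x = (f : G → W) (x * ↑γ) := rfl

theorem suppSub_invt (Γ' : Subgroup G) (U : Set G)
    (hU : ∀ x ∈ U, ∀ γ : Γ', x * ↑γ ∈ U) (γ : Γ') (f : cInd H ρ₁)
    (hf : f ∈ suppSub H ρ₁ U) : resRep Γ' (cIndRep H ρ₁) γ f ∈ suppSub H ρ₁ U := by
  intro x hx
  rw [res_apply]
  refine hf _ (fun hc => hx ?_)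
  have := hU _ hc γ⁻¹
  simpa [mul_assoc] using this

theorem cut_mem (U : Set G) (hU : ∀ (h : H) (x : G), x ∈ U ↔ (h : G) * x ∈ U) (f : cInd H ρ₁) :
    U.indicator (f : G → W) ∈ cInd H ρ₁ := by
  obtain ⟨hf, Sf, hSf, hsupp⟩ := f.2
  refine ⟨fun h x => ?_, Sf, hSf, ?_⟩
  · by_cases hx : x ∈ U
    · rw [Set.indicator_of_mem ((hU h x).1 hx), Set.indicator_of_mem hx, hf]
    · rw [Set.indicator_of_notMem (fun hc => hx ((hU h x).2 hc)),
        Set.indicator_of_notMem hx, map_zero]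
  · refine subset_trans ?_ hsupp
    exact Function.support_subset_iff.2 fun x hx => by
      by_cases hxU : x ∈ U
      · rw [Set.indicator_of_mem hxU] at hx; exact hx
      · rw [Set.indicator_of_notMem hxU] at hx; exact absurd rfl hx

theorem isCompl_suppSub (U : Set G) (hU : ∀ (h : H) (x : G), x ∈ U ↔ (h : G) * x ∈ U)
    (Γ' : Subgroup G)
    (hUr : ∀ x ∈ U, ∀ γ : Γ', x * ↑γ ∈ U) (hUrc : ∀ x ∈ Uᶜ, ∀ γ : Γ', x * ↑γ ∈ Uᶜ) :
    IsCompl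
      (toMA (resRep Γ' (cIndRep H ρ₁)) (suppSub H ρ₁ U)
        (fun γ f hf => suppSub_invt H ρ₁ Γ' U hUr γ f hf))
      (toMA (resRep Γ' (cIndRep H ρ₁)) (suppSub H ρ₁ Uᶜ)
        (fun γ f hf => suppSub_invt H ρ₁ Γ' Uᶜ hUrc γ f hf)) := by
  apply isCompl_of
  · intro f hfU hfUc
    let fc : cInd H ρ₁ := f
    have h1 : ∀ x : G, x ∉ U → (fc : G → W) x = 0 := hfU
    have h2 : ∀ x : G, x ∉ Uᶜ → (fc : G → W) x = 0 := hfUc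
    have h3 : (fc : G → W) = 0 := funext fun x => by
      by_cases hx : x ∈ U
      · exact h2 x (by simpa using hx)
      · exact h1 x hx
    show fc = 0
    exact Subtype.ext h3
  · intro f
    let fc : cInd H ρ₁ := f
    have hUc : ∀ (h : H) (x : G), x ∈ Uᶜ ↔ (h : G) * x ∈ Uᶜ := fun h x =>
      not_iff_not.2 (hU h x)
    refine ⟨(⟨U.indicator (fc : G → W), cut_mem H ρ₁ U hU fc⟩ : cInd H ρ₁), ?_,
      (⟨Uᶜ.indicator (fc : G → W), cut_mem H ρ₁ Uᶜ hUc fc⟩ : cInd H ρ₁), ?_, ?_⟩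
    · exact mem_toMA.mpr ((mem_suppSub H ρ₁).mpr
        (fun x hx => Set.indicator_of_notMem hx _))
    · exact mem_toMA.mpr ((mem_suppSub H ρ₁).mpr
        (fun x hx => Set.indicator_of_notMem (by simpa using hx) _))
    · show (⟨U.indicator (fc : G → W), _⟩ : cInd H ρ₁) + ⟨Uᶜ.indicator (fc : G → W), _⟩ = fc
      apply Subtype.ext
      show U.indicator (fc : G → W) + Uᶜ.indicator (fc : G → W) = (fc : G → W)
      exact Set.indicator_self_add_compl U (fc : G → W)

end CInd

end Stmt9Aux

open Stmt9Aux

/-- let `N ⊴ G` with `G/N` finite abelian, `N ≤ H ≤ G` with `H` of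
finite index, `k` a field, `ρ₁` an irreducible `k[H]`-module whose restriction
`ρ' = Res_N ρ₁` is irreducible, and suppose `π = Ind_H^G ρ₁` is irreducible and
`Res_N π` is semisimple.  Then `Res_H π` contains `ρ₁` as a direct summand, and
the multiplicity of `ρ'` in `Res_N π` equals `[S : H]`, where
`S = {g ∈ G : (ρ')ᵍ ≅ ρ'}` is the `G`-stabilizer of `ρ'` up to isomorphism. -/
theorem stmt9 {k : Type} [Field k] {G : Type} [Group G]
    (N H : Subgroup G) [hN : N.Normal] (hNH : N ≤ H) [H.FiniteIndex]
    [Finite (G ⧸ N)] (hcomm : ∀ a b : G ⧸ N, a * b = b * a)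
    {W : Type} [AddCommGroup W] [Module k W] (ρ₁ : Representation k H W)
    (hρ₁ : IsSimpleModule (MonoidAlgebra k H) ρ₁.asModule)
    (hρ' : IsSimpleModule (MonoidAlgebra k N)
      (Representation.asModule (ρ₁.comp (Subgroup.inclusion hNH))))
    (hπ : IsSimpleModule (MonoidAlgebra k G) (Representation.asModule (cIndRep H ρ₁)))
    (hss : IsSemisimpleModule (MonoidAlgebra k N)
      (Representation.asModule (resRep N (cIndRep H ρ₁))))
    (S : Subgroup G)
    (hS : ∀ g : G, g ∈ S ↔ ∃ T : W ≃ₗ[k] W, ∀ n : N,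
      (T : W →ₗ[k] W) ∘ₗ (ρ₁.comp (Subgroup.inclusion hNH)) n =
        (ρ₁.comp (Subgroup.inclusion hNH)) ⟨g * n * g⁻¹, hN.conj_mem n n.2 g⟩ ∘ₗ
          (T : W →ₗ[k] W)) :
    -- `ρ₁` is a direct summand of `Res_H π`
    (∃ (p q : Submodule (MonoidAlgebra k H)
        (Representation.asModule (resRep H (cIndRep H ρ₁)))),
      IsCompl p q ∧ Nonempty (p ≃ₗ[MonoidAlgebra k H] ρ₁.asModule)) ∧
    -- the multiplicity of `ρ'` in `Res_N π` is `[S : H]`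
    (∃ (p q : Submodule (MonoidAlgebra k N)
        (Representation.asModule (resRep N (cIndRep H ρ₁)))),
      IsCompl p q ∧
      Nonempty (p ≃ₗ[MonoidAlgebra k N]
        (Fin (H.relIndex S) →
          Representation.asModule (ρ₁.comp (Subgroup.inclusion hNH)))) ∧
      ∀ f : Representation.asModule (ρ₁.comp (Subgroup.inclusion hNH))
          →ₗ[MonoidAlgebra k N] q, f = 0) := by
  classical
  constructor
  · -- Part 1 : `ρ₁` is a direct summand of `Res_H π`
    have hUr : ∀ x ∈ (H : Set G), ∀ γ : H, x * ↑γ ∈ (H : Set G) := fun x hx γ =>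
      mul_mem hx γ.2
    have hUrc : ∀ x ∈ ((H : Set G))ᶜ, ∀ γ : H, x * ↑γ ∈ ((H : Set G))ᶜ := fun x hx γ hc =>
      hx (by simpa using mul_mem hc (inv_mem γ.2))
    have hU : ∀ (h : H) (x : G), x ∈ (H : Set G) ↔ (h : G) * x ∈ (H : Set G) := fun h x =>
      (Subgroup.mul_mem_cancel_left H h.2).symm
    refine ⟨_, _, isCompl_suppSub H ρ₁ (H : Set G) hU H hUr hUrc, ?_⟩
    -- the isomorphism with ρ₁, via evaluation at 1
    have hφ : ∀ (h : H) (f : cInd H ρ₁),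
        ((LinearMap.proj (1 : G)).comp (cInd H ρ₁).subtype)
            (resRep H (cIndRep H ρ₁) h f) =
          ρ₁ h (((LinearMap.proj (1 : G)).comp (cInd H ρ₁).subtype) f) := by
      intro h f
      show ((resRep H (cIndRep H ρ₁) h f : cInd H ρ₁) : G → W) 1 = ρ₁ h ((f : G → W) 1)
      rw [res_apply, one_mul, ← mul_one ((h : G))]
      exact cInd_spec H ρ₁ f h 1
    refine ⟨LinearEquiv.ofBijective
      ((eqvHom (resRep H (cIndRep H ρ₁)) ρ₁ _ hφ).comp (Submodule.subtype _)) ⟨?_, ?_⟩⟩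
    · -- injective
      refine inj_of_ker _ ?_
      intro u hu
      let uc : ↥(cInd H ρ₁) := u.1
      have h0 : (uc : G → W) 1 = 0 := hu
      have hmem : ∀ x : G, x ∉ (H : Set G) → (uc : G → W) x = 0 := mem_toMA.mp u.2
      apply Subtype.ext
      show uc = 0
      apply Subtype.ext
      funext x
      show (uc : G → W) x = 0
      by_cases hx : x ∈ H
      · have h1 := cInd_spec H ρ₁ uc ⟨x, hx⟩ 1
        rw [mul_one] at h1
        rw [h1, h0, map_zero]
      · exact hmem x hx
    · -- surjective
      intro w
      have hFc : (fun x => if hx : x ∈ H then ρ₁ ⟨x, hx⟩ w else 0) ∈ cInd H ρ₁ := by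
        refine ⟨fun h x => ?_, {1}, Set.finite_singleton 1, ?_⟩
        · dsimp only []
          by_cases hx : x ∈ H
          · rw [dif_pos hx, dif_pos (mul_mem h.2 hx),
              show (⟨(h : G) * x, mul_mem h.2 hx⟩ : H) = h * ⟨x, hx⟩ from Subtype.ext rfl,
              map_mul]
            rfl
          · rw [dif_neg hx, dif_neg (fun hc => hx ((Subgroup.mul_mem_cancel_left H h.2).mp hc)),
              map_zero]
        · intro x hxsupp
          have hx : x ∈ H := by
            by_contra hx
            exact hxsupp (dif_neg hx)
          exact Set.mem_mul.mpr ⟨x, hx, 1, Set.mem_singleton 1, mul_one x⟩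
      refine ⟨⟨⟨_, hFc⟩, mem_toMA.mpr (fun x hx => dif_neg hx)⟩, ?_⟩
      show (if hx : (1 : G) ∈ H then ρ₁ ⟨1, hx⟩ w else 0) = w
      rw [dif_pos H.one_mem, show (⟨(1 : G), H.one_mem⟩ : H) = 1 from rfl, map_one]
      rfl
  · -- Part 2 : multiplicity of ρ' in Res_N π is [S : H]
    set ρ2 := ρ₁.comp (Subgroup.inclusion hNH) with hρ2
    -- H ≤ S
    have hHS : H ≤ S := by
      intro h hh
      rw [hS]
      have hT1 : (ρ₁ ⟨h, hh⟩) ∘ₗ (ρ₁ (⟨h, hh⟩ : H)⁻¹) = LinearMap.id := by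
        rw [← Module.End.mul_eq_comp, ← map_mul, mul_inv_cancel, map_one, Module.End.one_eq_id]
      have hT2 : (ρ₁ (⟨h, hh⟩ : H)⁻¹) ∘ₗ (ρ₁ ⟨h, hh⟩) = LinearMap.id := by
        rw [← Module.End.mul_eq_comp, ← map_mul, inv_mul_cancel, map_one, Module.End.one_eq_id]
      refine ⟨LinearEquiv.ofLinear (ρ₁ ⟨h, hh⟩) (ρ₁ (⟨h, hh⟩ : H)⁻¹) hT1 hT2, fun n => ?_⟩
      have he : (⟨h, hh⟩ : H) * (Subgroup.inclusion hNH n) =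
          (Subgroup.inclusion hNH (⟨h * ↑n * h⁻¹, hN.conj_mem ↑n n.2 h⟩ : N)) * ⟨h, hh⟩ := by
        apply Subtype.ext
        simp only [Subgroup.coe_mul, Subgroup.coe_inclusion]
        group
      apply LinearMap.ext
      intro v
      show ρ₁ ⟨h, hh⟩ (ρ₁ (Subgroup.inclusion hNH n) v) =
        ρ₁ (Subgroup.inclusion hNH _) (ρ₁ ⟨h, hh⟩ v)
      rw [← Module.End.mul_apply, ← map_mul, he, map_mul, Module.End.mul_apply]
    -- index bookkeeping
    have hidx : H.relIndex S ≠ 0 := by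
      intro h0
      have h1 := Subgroup.relIndex_mul_index hHS
      rw [h0, zero_mul] at h1
      exact Subgroup.FiniteIndex.index_ne_zero h1.symm
    haveI hQfin : Finite (S ⧸ H.subgroupOf S) := Nat.finite_of_card_ne_zero hidx
    haveI := Fintype.ofFinite (S ⧸ H.subgroupOf S)
    have hcard : Fintype.card (S ⧸ H.subgroupOf S) = H.relIndex S := by
      rw [← Nat.card_eq_fintype_card]; rfl
    let e : Fin (H.relIndex S) ≃ (S ⧸ H.subgroupOf S) := (Fintype.equivFinOfCardEq hcard).symm
    -- coset representatives
    let rfun : (S ⧸ H.subgroupOf S) → S := fun q => (q.out)⁻¹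
    let cq : ∀ x : G, x ∈ S → (S ⧸ H.subgroupOf S) := fun x hx =>
      QuotientGroup.mk ((⟨x, hx⟩ : S)⁻¹)
    have hcq : ∀ (x : G) (hx : x ∈ S), x * ↑(((cq x hx).out : S)) ∈ H := by
      intro x hx
      have h1 : (((⟨x, hx⟩ : S)⁻¹ : S) : S ⧸ H.subgroupOf S) = ((cq x hx).out : S ⧸ H.subgroupOf S) :=
        (QuotientGroup.out_eq' (cq x hx)).symm
      have h2 := QuotientGroup.eq.mp h1
      rw [inv_inv] at h2
      have h3 := Subgroup.mem_subgroupOf.mp h2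
      simpa using h3
    have hcq_r : ∀ q : (S ⧸ H.subgroupOf S), cq ↑(rfun q) (rfun q).2 = q := by
      intro q
      show QuotientGroup.mk ((rfun q)⁻¹) = q
      show QuotientGroup.mk (((q.out)⁻¹)⁻¹) = q
      rw [inv_inv]
      exact QuotientGroup.out_eq' q
    have hcq_left : ∀ (h0 : H) (x : G) (hx : x ∈ S) (hx' : (h0 : G) * x ∈ S),
        cq ((h0 : G) * x) hx' = cq x hx := by
      intro h0 x hx hx'
      show ((((⟨(h0 : G) * x, hx'⟩ : S))⁻¹ : S) : S ⧸ H.subgroupOf S) = ↑((⟨x, hx⟩ : S)⁻¹)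
      rw [QuotientGroup.eq, inv_inv, Subgroup.mem_subgroupOf]
      show ((h0 : G) * x) * x⁻¹ ∈ H
      simpa using h0.2
    -- intertwiners for the representatives
    have hTex : ∀ q : (S ⧸ H.subgroupOf S), ∃ T : W ≃ₗ[k] W, ∀ n : N,
        (T : W →ₗ[k] W) ∘ₗ ρ2 n =
          ρ2 ⟨↑(rfun q) * ↑n * (↑(rfun q) : G)⁻¹, hN.conj_mem ↑n n.2 ↑(rfun q)⟩ ∘ₗ
            (T : W →ₗ[k] W) := fun q => (hS ↑(rfun q)).1 (rfun q).2
    choose T hT using hTex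
    -- stability of S and Sᶜ
    have hUS : ∀ (h0 : H) (x : G), x ∈ (S : Set G) ↔ (h0 : G) * x ∈ (S : Set G) := fun h0 x =>
      (Subgroup.mul_mem_cancel_left S (hHS h0.2)).symm
    have hUrS : ∀ x ∈ (S : Set G), ∀ γ : N, x * ↑γ ∈ (S : Set G) := fun x hx γ =>
      mul_mem hx (hHS (hNH γ.2))
    have hUrSc : ∀ x ∈ ((S : Set G))ᶜ, ∀ γ : N, x * ↑γ ∈ ((S : Set G))ᶜ := fun x hx γ hc =>
      hx (by simpa using mul_mem hc (inv_mem (hHS (hNH γ.2))))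
    refine ⟨_, _, isCompl_suppSub H ρ₁ (S : Set G) hUS N hUrS hUrSc, ⟨?_⟩, ?_⟩
    · -- the isomorphism with [S:H] copies of ρ'
      have hφq : ∀ q : (S ⧸ H.subgroupOf S), ∀ (n : N) (f : cInd H ρ₁),
          ((T q).symm.toLinearMap ∘ₗ ((LinearMap.proj ((rfun q : S) : G)) ∘ₗ (cInd H ρ₁).subtype))
              (resRep N (cIndRep H ρ₁) n f) =
            ρ2 n (((T q).symm.toLinearMap ∘ₗ
              ((LinearMap.proj ((rfun q : S) : G)) ∘ₗ (cInd H ρ₁).subtype)) f) := by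
        intro q n f
        show (T q).symm (((resRep N (cIndRep H ρ₁) n f : cInd H ρ₁) : G → W) ↑(rfun q)) =
          ρ2 n ((T q).symm ((f : G → W) ↑(rfun q)))
        rw [res_apply]
        have hconj : (↑(rfun q) : G) * ↑n =
            ↑(⟨↑(rfun q) * ↑n * (↑(rfun q) : G)⁻¹,
                hNH (hN.conj_mem ↑n n.2 ↑(rfun q))⟩ : H) * ↑(rfun q) := by
          show (↑(rfun q) : G) * ↑n = (↑(rfun q) * ↑n * (↑(rfun q) : G)⁻¹) * ↑(rfun q)
          group
        rw [hconj, cInd_spec]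
        show (T q).symm
            (ρ2 (⟨↑(rfun q) * ↑n * (↑(rfun q) : G)⁻¹, hN.conj_mem ↑n n.2 ↑(rfun q)⟩ : N)
              ((f : G → W) ↑(rfun q))) = ρ2 n ((T q).symm ((f : G → W) ↑(rfun q)))
        have h2 := LinearMap.congr_fun (hT q n) ((T q).symm ((f : G → W) ↑(rfun q)))
        simp only [LinearMap.comp_apply, LinearEquiv.coe_coe] at h2
        rw [LinearEquiv.apply_symm_apply] at h2
        rw [← h2, LinearEquiv.symm_apply_apply]
      refine LinearEquiv.ofBijective
        (LinearMap.pi (fun i => (eqvHom (resRep N (cIndRep H ρ₁)) ρ2 _ (hφq (e i))).comp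
          (Submodule.subtype _))) ⟨?_, ?_⟩
      · -- injective
        refine inj_of_ker _ ?_
        intro u hu
        let uc : ↥(cInd H ρ₁) := u.1
        have hcomp : ∀ q : (S ⧸ H.subgroupOf S), (uc : G → W) ↑(rfun q) = 0 := by
          intro q
          have h1 : (T (e (e.symm q))).symm ((uc : G → W) ↑(rfun (e (e.symm q)))) = 0 :=
            congr_fun hu (e.symm q)
          rw [e.apply_symm_apply] at h1
          exact (LinearEquiv.map_eq_zero_iff _).mp h1
        have hmem : ∀ x : G, x ∉ (S : Set G) → (uc : G → W) x = 0 := mem_toMA.mp u.2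
        apply Subtype.ext
        show uc = 0
        apply Subtype.ext
        funext x
        show (uc : G → W) x = 0
        by_cases hx : x ∈ S
        · have h1 := cInd_spec H ρ₁ uc
            ⟨x * ↑(((cq x hx).out : S)), hcq x hx⟩ ↑(rfun (cq x hx))
          have h2 : (x * ↑(((cq x hx).out : S))) * (↑(rfun (cq x hx)) : G) = x := by
            show (x * ↑(((cq x hx).out : S))) * ((↑(((cq x hx).out : S)) : G))⁻¹ = x
            exact mul_inv_cancel_right _ _
          rw [h2] at h1
          rw [h1, hcomp (cq x hx), map_zero]
        · exact hmem x hx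
      · -- surjective
        intro v
        have hkey : ∀ (x : G) (hx : x ∈ S) (q0 : S ⧸ H.subgroupOf S) (hq0 : cq x hx = q0)
            (hm : x * ↑((q0.out : S)) ∈ H),
            (if hx' : x ∈ S then
                ρ₁ ⟨x * ↑(((cq x hx').out : S)), hcq x hx'⟩
                  ((T (cq x hx')) (v (e.symm (cq x hx')))) else 0) =
              ρ₁ ⟨x * ↑((q0.out : S)), hm⟩ ((T q0) (v (e.symm q0))) := by
          intro x hx q0 hq0 hm
          rw [dif_pos hx]
          subst hq0
          rfl
        have hFc : (fun x => if hx : x ∈ S then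
            ρ₁ ⟨x * ↑(((cq x hx).out : S)), hcq x hx⟩
              ((T (cq x hx)) (v (e.symm (cq x hx)))) else 0) ∈ cInd H ρ₁ := by
          refine ⟨fun h0 x => ?_, Set.range (fun q : (S ⧸ H.subgroupOf S) => ((rfun q : S) : G)),
            Set.finite_range _, ?_⟩
          · dsimp only []
            by_cases hx : x ∈ S
            · have hx' : (h0 : G) * x ∈ S := mul_mem (hHS h0.2) hx
              have hm' : ((h0 : G) * x) * ↑(((cq x hx).out : S)) ∈ H := by
                rw [mul_assoc]
                exact mul_mem h0.2 (hcq x hx)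
              rw [hkey ((h0 : G) * x) hx' (cq x hx) (hcq_left h0 x hx hx') hm',
                hkey x hx (cq x hx) rfl (hcq x hx),
                show (⟨(h0 : G) * x * ↑(((cq x hx).out : S)), hm'⟩ : H) =
                  h0 * ⟨x * ↑(((cq x hx).out : S)), hcq x hx⟩ from Subtype.ext (by
                    simp [mul_assoc]),
                map_mul, Module.End.mul_apply]
            · have hx' : (h0 : G) * x ∉ S := fun hc =>
                hx ((Subgroup.mul_mem_cancel_left S (hHS h0.2)).mp hc)
              rw [dif_neg hx', dif_neg hx, map_zero]
          · intro x hxsupp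
            have hx : x ∈ S := by
              by_contra hx
              exact hxsupp (dif_neg hx)
            refine Set.mem_mul.mpr ⟨x * ↑(((cq x hx).out : S)), hcq x hx,
              ((rfun (cq x hx) : S) : G), ⟨cq x hx, rfl⟩, ?_⟩
            show (x * ↑(((cq x hx).out : S))) * ((↑(((cq x hx).out : S)) : G))⁻¹ = x
            exact mul_inv_cancel_right _ _
        refine ⟨⟨⟨_, hFc⟩, mem_toMA.mpr (fun x hx => dif_neg hx)⟩, ?_⟩
        funext i
        show (T (e i)).symm
          (if hx' : ((rfun (e i) : S) : G) ∈ S then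
              ρ₁ ⟨↑(rfun (e i)) * ↑(((cq ↑(rfun (e i)) hx').out : S)), hcq _ hx'⟩
                ((T (cq ↑(rfun (e i)) hx')) (v (e.symm (cq ↑(rfun (e i)) hx')))) else 0) = v i
        have hone : (↑(rfun (e i)) : G) * ↑(((e i).out : S)) ∈ H := by
          have h1 : (↑(rfun (e i)) : G) * ↑(((e i).out : S)) = 1 := inv_mul_cancel _
          rw [h1]; exact H.one_mem
        rw [hkey _ (rfun (e i)).2 (e i) (hcq_r (e i)) hone,
          show (⟨(↑(rfun (e i)) : G) * ↑(((e i).out : S)), hone⟩ : H) = 1 from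
            Subtype.ext (inv_mul_cancel _),
          map_one, e.symm_apply_apply]
        exact (T (e i)).symm_apply_apply (v i)
    · -- no nonzero maps from ρ' into the complement
      intro f
      by_contra hf
      obtain ⟨w, hw⟩ := DFunLike.ne_iff.mp hf
      let uc : ↥(cInd H ρ₁) := (f w).1
      have hune : uc ≠ 0 := fun h => hw (Subtype.ext h)
      have hfne : ¬ (uc : G → W) = 0 := fun h => hune (Subtype.ext h)
      obtain ⟨x, hx0⟩ := Function.ne_iff.mp hfne
      have hmem : ∀ y : G, y ∉ ((S : Set G))ᶜ → (uc : G → W) y = 0 := mem_toMA.mp (f w).2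
      have hxS : x ∉ S := fun hc => hx0 (hmem x (by simpa using hc))
      -- the conjugate representation at x
      let φx : N →* H :=
        { toFun := fun n => ⟨x * ↑n * x⁻¹, hNH (hN.conj_mem ↑n n.2 x)⟩
          map_one' := Subtype.ext (by simp)
          map_mul' := fun a b => Subtype.ext (by
            show x * ↑(a * b) * x⁻¹ = (x * ↑a * x⁻¹) * (x * ↑b * x⁻¹)
            rw [Subgroup.coe_mul]
            group) }
      let τ : Representation k (N : Subgroup G) W := ρ₁.comp φx
      have hρ2τ : ∀ (p : Submodule k W),
          (∀ g v, v ∈ p → τ g v ∈ p) → ∀ g v, v ∈ p → ρ2 g v ∈ p := by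
        intro p hp n vv hvv
        have hmemN : x⁻¹ * ↑n * x ∈ N := by simpa using hN.conj_mem ↑n n.2 x⁻¹
        have he : τ ⟨x⁻¹ * ↑n * x, hmemN⟩ = ρ2 n := by
          have h1 : φx ⟨x⁻¹ * ↑n * x, hmemN⟩ = Subgroup.inclusion hNH n := by
            apply Subtype.ext
            show x * (x⁻¹ * ↑n * x) * x⁻¹ = ↑(Subgroup.inclusion hNH n)
            rw [Subgroup.coe_inclusion]
            group
          show ρ₁ (φx ⟨x⁻¹ * ↑n * x, hmemN⟩) = ρ₁ (Subgroup.inclusion hNH n)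
          rw [h1]
        rw [← he]
        exact hp _ vv hvv
      haveI hτsimple : IsSimpleModule (MonoidAlgebra k N) τ.asModule :=
        isSimple_congr ρ2 τ hρ2τ hρ'
      haveI := hρ'
      -- evaluation at x is equivariant into the conjugate representation
      have hφev : ∀ (n : N) (f' : cInd H ρ₁),
          ((LinearMap.proj x).comp (cInd H ρ₁).subtype) (resRep N (cIndRep H ρ₁) n f') =
            τ n (((LinearMap.proj x).comp (cInd H ρ₁).subtype) f') := by
        intro n f'
        show ((resRep N (cIndRep H ρ₁) n f' : cInd H ρ₁) : G → W) x =
          τ n ((f' : G → W) x)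
        rw [res_apply]
        have hconj : x * ↑n = ↑(φx n) * x := by
          show x * ↑n = (x * ↑n * x⁻¹) * x
          group
        rw [hconj, cInd_spec]
        rfl
      set g0 := (eqvHom (resRep N (cIndRep H ρ₁)) τ _ hφev).comp
        ((Submodule.subtype _).comp f) with hg0def
      have hg0 : g0 w ≠ 0 := hx0
      rcases g0.bijective_or_eq_zero with hb | h0
      · apply hxS
        rw [hS]
        refine ⟨LinearEquiv.ofBijective (maToK ρ2 τ g0) hb, fun n => ?_⟩
        apply LinearMap.ext
        intro vv
        show maToK ρ2 τ g0 (ρ2 n vv) =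
          ρ2 ⟨x * ↑n * x⁻¹, hN.conj_mem ↑n n.2 x⟩ (maToK ρ2 τ g0 vv)
        rw [maToK_comm]
        rfl
      · exact hg0 (by rw [h0]; rfl)
end

section
/- Let G be a locally profinite group, K an open subgroup of G, H an open subgroup of K, k a field, and λ a k[H]-module. Suppose (i) End_{k[K]}(ind_H^K λ) = k (the K-intertwining of λ is H), and (ii) for every irreducible k[K]-module ν, if λ embeds in Res_H ν then there is a surjection Res_H ν ↠ λ. Then ind_H^K λ is irreducible. (Vignéras's irreducibility criterion, finite-index abstract version: H ≤ K with [K:H] < ∞, λ irreducible k[H]-module with End_{k[K]}(Ind_H^K λ) = k and the self-duality condition (ii); conclude Ind_H^K λ is an irreducible k[K]-module.) -/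
open Pointwise DirectSum
open scoped DirectSum

open Paper


namespace Stmt18Aux

open Paper MonoidAlgebra
open scoped Classical

variable {k : Type} [Field k] {K : Type} [Group K] (H : Subgroup K)
variable {W : Type} [AddCommGroup W] [Module k W] (lam : Representation k H W)

/-- Evaluation of an element of the induced module as a function `K → W`. -/
def ev (f : Representation.asModule (cIndRep H lam)) : K → W :=
  ((show cInd H lam from f : cInd H lam) : K → W)

lemma ev_add (f g : Representation.asModule (cIndRep H lam)) :
    ev H lam (f + g) = ev H lam f + ev H lam g := rfl

lemma ev_zero : ev H lam 0 = 0 := rfl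

lemma ev_inj {f g : Representation.asModule (cIndRep H lam)} (h : ev H lam f = ev H lam g) :
    f = g := Subtype.ext h

lemma ev_equiv (f : Representation.asModule (cIndRep H lam)) (h : H) (x : K) :
    ev H lam f ((h : K) * x) = lam h (ev H lam f x) :=
  (show cInd H lam from f).2.1 h x

lemma ev_support (f : Representation.asModule (cIndRep H lam)) :
    ∃ S : Set K, S.Finite ∧ Function.support (ev H lam f) ⊆ (H : Set K) * S :=
  (show cInd H lam from f).2.2

lemma ev_smul_single (z : K) (c : k) (f : Representation.asModule (cIndRep H lam)) (x : K) :
    ev H lam (MonoidAlgebra.single z c • f) x = c • ev H lam f (x * z) := by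
  show ev H lam ((cIndRep H lam).asAlgebraHom (MonoidAlgebra.single z c) f) x = _
  rw [Representation.asAlgebraHom_single]
  rfl

lemma lam_smul_single (h : H) (c : k) (w : lam.asModule) :
    (MonoidAlgebra.single h c • w : lam.asModule) = c • lam h w := by
  show lam.asAlgebraHom (MonoidAlgebra.single h c) w = _
  rw [Representation.asAlgebraHom_single]
  rfl

lemma mapDomainRingHom_single (h : H) (c : k) :
    MonoidAlgebra.mapDomainRingHom k H.subtype (MonoidAlgebra.single h c)
      = MonoidAlgebra.single (h : K) c := by
  simp [MonoidAlgebra.mapDomainRingHom]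

/-- `w ↦ e_w`, the element of the induced module supported on `H` with `e_w x = lam x w`. -/
noncomputable def e (w : W) : Representation.asModule (cIndRep H lam) :=
  show cInd H lam from
  ⟨fun x => if hx : x ∈ H then lam ⟨x, hx⟩ w else 0, by
    constructor
    · intro h x
      by_cases hx : x ∈ H
      · have hhx : (h : K) * x ∈ H := mul_mem h.2 hx
        simp only [dif_pos hx, dif_pos hhx]
        have : (⟨(h : K) * x, hhx⟩ : H) = h * ⟨x, hx⟩ := rfl
        rw [this, map_mul]
        rfl
      · have hhx : (h : K) * x ∉ H := by
          intro hc
          exact hx (by simpa using mul_mem (inv_mem h.2) hc)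
        simp only [dif_neg hx, dif_neg hhx, map_zero]
    · refine ⟨{1}, Set.finite_singleton _, ?_⟩
      intro x hx
      by_cases hxH : x ∈ H
      · exact ⟨x, hxH, 1, rfl, mul_one x⟩
      · simp only [Function.mem_support, dif_neg hxH, ne_eq, not_true_eq_false] at hx⟩

lemma ev_e (w : W) (x : K) :
    ev H lam (e H lam w) x = if hx : x ∈ H then lam ⟨x, hx⟩ w else 0 := rfl

lemma ev_e_mem (w : W) {x : K} (hx : x ∈ H) :
    ev H lam (e H lam w) x = lam ⟨x, hx⟩ w := dif_pos hx

lemma ev_e_not_mem (w : W) {x : K} (hx : x ∉ H) :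
    ev H lam (e H lam w) x = 0 := dif_neg hx

lemma ev_e_one (w : W) : ev H lam (e H lam w) 1 = w := by
  rw [ev_e_mem H lam w H.one_mem]
  have : (⟨(1 : K), H.one_mem⟩ : H) = 1 := rfl
  rw [this, map_one]
  rfl

lemma e_add (w w' : W) : e H lam (w + w') = e H lam w + e H lam w' := by
  apply ev_inj; funext x
  rw [ev_add]
  by_cases hx : x ∈ H
  · rw [ev_e_mem H lam _ hx, Pi.add_apply, ev_e_mem H lam _ hx, ev_e_mem H lam _ hx, map_add]
  · rw [ev_e_not_mem H lam _ hx, Pi.add_apply, ev_e_not_mem H lam _ hx, ev_e_not_mem H lam _ hx,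
      add_zero]

lemma e_single_smul (h : H) (c : k) (w : lam.asModule) :
    e H lam (MonoidAlgebra.single h c • w)
      = MonoidAlgebra.single (h : K) c • e H lam w := by
  apply ev_inj; funext x
  rw [ev_smul_single]
  by_cases hx : x ∈ H
  · have hxh : x * (h : K) ∈ H := mul_mem hx h.2
    erw [ev_e_mem H lam _ hx, ev_e_mem H lam _ hxh, lam_smul_single]
    have : (⟨x * (h : K), hxh⟩ : H) = ⟨x, hx⟩ * h := rfl
    rw [this, map_mul, map_smul]
    rfl
  · have hxh : x * (h : K) ∉ H := by
      intro hc
      exact hx (by simpa using mul_mem hc (inv_mem h.2))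
    erw [ev_e_not_mem H lam _ hx, ev_e_not_mem H lam _ hxh, smul_zero]

lemma e_smul (a : MonoidAlgebra k H) (w : lam.asModule) :
    e H lam (a • w) = MonoidAlgebra.mapDomainRingHom k H.subtype a • e H lam w := by
  induction a using MonoidAlgebra.induction with
  | zero =>
      rw [zero_smul, map_zero, zero_smul]
      apply ev_inj; funext x
      by_cases hx : x ∈ H
      · erw [ev_e_mem H lam _ hx, map_zero, ev_zero]; rfl
      · erw [ev_e_not_mem H lam _ hx, ev_zero]; rfl
  | single_add h c a _ _ ih =>
      erw [add_smul, e_add, e_single_smul, ih, map_add, mapDomainRingHom_single, add_smul]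

lemma e_zero : e H lam 0 = 0 := by
  apply ev_inj; funext x
  by_cases hx : x ∈ H
  · rw [ev_e_mem H lam _ hx, map_zero, ev_zero]; rfl
  · rw [ev_e_not_mem H lam _ hx, ev_zero]; rfl

lemma e_mem_span (hlam : IsSimpleModule (MonoidAlgebra k H) lam.asModule)
    {v : lam.asModule} (hv : v ≠ 0) (w : lam.asModule) :
    e H lam w ∈ Submodule.span (MonoidAlgebra k K) {e H lam v} := by
  set Sp := Submodule.span (MonoidAlgebra k K) {e H lam v} with hSp
  let T : Submodule (MonoidAlgebra k H) lam.asModule :=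
    { carrier := {u | e H lam u ∈ Sp}
      add_mem' := by
        intro a b ha hb
        show e H lam (a + b) ∈ Sp
        erw [e_add]
        exact Sp.add_mem ha hb
      zero_mem' := by
        show e H lam 0 ∈ Sp
        rw [e_zero]
        exact Sp.zero_mem
      smul_mem' := by
        intro a u hu
        show e H lam (a • u) ∈ Sp
        rw [e_smul]
        exact Sp.smul_mem _ hu }
  have hvT : v ∈ T := Submodule.subset_span rfl
  have hT : T = ⊤ := by
    rcases eq_bot_or_eq_top T with h | h
    · exact absurd (h ▸ hvT) (by simpa using hv)
    · exact h
  have : w ∈ T := hT ▸ Submodule.mem_top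
  exact this

lemma mem_span_of_support (hlam : IsSimpleModule (MonoidAlgebra k H) lam.asModule)
    {v : W} (hv : v ≠ 0) (S : Set K) (hS : S.Finite) :
    ∀ f : Representation.asModule (cIndRep H lam),
      Function.support (ev H lam f) ⊆ (H : Set K) * S →
      f ∈ Submodule.span (MonoidAlgebra k K) {e H lam v} := by
  refine Set.Finite.induction_on S hS ?_ ?_
  · intro f hf
    have : ev H lam f = 0 := by
      rw [← Function.support_eq_empty_iff]
      rw [Set.mul_empty] at hf
      exact Set.subset_empty_iff.mp hf
    have : f = 0 := ev_inj H lam (by rw [this, ev_zero])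
    rw [this]
    exact Submodule.zero_mem _
  · intro a S' _ hS' ih f hsupp
    -- the piece of `f` supported on the coset `H * a`
    set f₁ : Representation.asModule (cIndRep H lam) :=
      (show cInd H lam from
        ⟨fun x => if x * a⁻¹ ∈ H then ev H lam f x else 0, by
          constructor
          · intro h x
            by_cases hx : x * a⁻¹ ∈ H
            · have hhx : (h : K) * x * a⁻¹ ∈ H := by
                rw [mul_assoc]
                exact mul_mem h.2 hx
              simp only [if_pos hx, if_pos hhx]
              exact ev_equiv H lam f h x
            · have hhx : (h : K) * x * a⁻¹ ∉ H := by
                intro hc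
                apply hx
                have : x * a⁻¹ = (h : K)⁻¹ * ((h : K) * x * a⁻¹) := by group
                rw [this]
                exact mul_mem (inv_mem h.2) hc
              simp only [if_neg hx, if_neg hhx, map_zero]
          · refine ⟨{a}, Set.finite_singleton _, ?_⟩
            intro x hx
            by_cases hxa : x * a⁻¹ ∈ H
            · exact ⟨x * a⁻¹, hxa, a, rfl, by group⟩
            · simp only [Function.mem_support, if_neg hxa, ne_eq, not_true_eq_false] at hx⟩) with hf₁
    have hev₁ : ∀ x, ev H lam f₁ x = if x * a⁻¹ ∈ H then ev H lam f x else 0 := fun _ => rfl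
    have hA : f₁ = MonoidAlgebra.single a⁻¹ (1 : k) • e H lam (ev H lam f a) := by
      apply ev_inj; funext x
      rw [ev_smul_single, one_smul, hev₁]
      by_cases hx : x * a⁻¹ ∈ H
      · rw [if_pos hx, ev_e_mem H lam _ hx]
        have hxa : x = (⟨x * a⁻¹, hx⟩ : H) * a := by
          show x = x * a⁻¹ * a
          group
        conv_lhs => rw [hxa]
        exact ev_equiv H lam f ⟨x * a⁻¹, hx⟩ a
      · rw [if_neg hx, ev_e_not_mem H lam _ hx]
    have hf₁mem : f₁ ∈ Submodule.span (MonoidAlgebra k K) {e H lam v} := by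
      rw [hA]
      exact Submodule.smul_mem _ _ (e_mem_span H lam hlam hv _)
    have hsupp₂ : Function.support (ev H lam (f - f₁)) ⊆ (H : Set K) * S' := by
      intro x hx
      by_contra hxS
      apply hx
      show ev H lam (f - f₁) x = 0
      have hsub : ev H lam (f - f₁) x = ev H lam f x - ev H lam f₁ x := rfl
      by_cases hxa : x * a⁻¹ ∈ H
      · rw [hsub, hev₁, if_pos hxa, sub_self]
      · have hfx : ev H lam f x = 0 := by
          by_contra hfx
          rcases hsupp hfx with ⟨h, hh, s, hs, heq⟩
          rcases Set.mem_insert_iff.mp hs with rfl | hsS'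
          · exact hxa (by rw [← heq]; simpa using hh)
          · exact hxS ⟨h, hh, s, hsS', heq⟩
        rw [hsub, hev₁, if_neg hxa, hfx, sub_zero]
    have : f = f₁ + (f - f₁) := by abel
    rw [this]
    exact Submodule.add_mem _ hf₁mem (ih (f - f₁) hsupp₂)

lemma span_e_top (hlam : IsSimpleModule (MonoidAlgebra k H) lam.asModule)
    {v : W} (hv : v ≠ 0) :
    Submodule.span (MonoidAlgebra k K) {e H lam v} = ⊤ := by
  rw [eq_top_iff]
  intro f _
  obtain ⟨S, hS, hsupp⟩ := ev_support H lam f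
  exact mem_span_of_support H lam hlam hv S hS f hsupp

lemma exists_finite_cover [H.FiniteIndex] :
    ∃ S : Set K, S.Finite ∧ (H : Set K) * S = Set.univ := by
  refine ⟨Set.range (fun q : K ⧸ H => (Quotient.out q)⁻¹), Set.finite_range _, ?_⟩
  ext x
  simp only [Set.mem_univ, iff_true]
  set g := (Quotient.out (QuotientGroup.mk x⁻¹ : K ⧸ H)) with hg
  have hmk : (QuotientGroup.mk g : K ⧸ H) = QuotientGroup.mk x⁻¹ := Quotient.out_eq _
  have hmem : g⁻¹ * x⁻¹ ∈ H := QuotientGroup.eq.mp hmk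
  exact ⟨(g⁻¹ * x⁻¹)⁻¹, inv_mem hmem, g⁻¹, ⟨_, rfl⟩, by group⟩

end Stmt18Aux


/-- Vignéras's irreducibility criterion, finite-index abstract
version: let `H ≤ K` be of finite index, `k` a field, `λ` an irreducible
`k[H]`-module and `π = Ind_H^K λ`.  Assume
(1) `End_{k[K]}(π) = k` (every `k[K]`-endomorphism of `π` is a scalar), and
(2) for every irreducible `k[K]`-module `ν`, if `Hom_{k[H]}(λ, Res_H ν) ≠ 0` then
`Hom_{k[H]}(Res_H ν, λ) ≠ 0`.
Then `π = Ind_H^K λ` is irreducible. -/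
theorem stmt18 {k : Type} [Field k] {K : Type} [Group K]
    (H : Subgroup K) [H.FiniteIndex]
    {W : Type} [AddCommGroup W] [Module k W] (lam : Representation k H W)
    (hlam : IsSimpleModule (MonoidAlgebra k H) lam.asModule)
    (hEnd : ∀ f : Representation.asModule (cIndRep H lam) →ₗ[MonoidAlgebra k K]
        Representation.asModule (cIndRep H lam),
      ∃ c : k, ∀ v, f v = (MonoidAlgebra.single (1 : K) c) • v)
    (hdual : ∀ ν : ModuleCat (MonoidAlgebra k K), IsSimpleModule (MonoidAlgebra k K) ν →
      (∃ f : lam.asModule →ₗ[MonoidAlgebra k H]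
          ((ModuleCat.restrictScalars (MonoidAlgebra.mapDomainRingHom k H.subtype)).obj ν),
        f ≠ 0) →
      (∃ g : ((ModuleCat.restrictScalars (MonoidAlgebra.mapDomainRingHom k H.subtype)).obj ν)
          →ₗ[MonoidAlgebra k H] lam.asModule, g ≠ 0)) :
    IsSimpleModule (MonoidAlgebra k K) (Representation.asModule (cIndRep H lam)) := by
  classical
  haveI := hlam
  have : Nontrivial lam.asModule :=
    IsSimpleModule.nontrivial (MonoidAlgebra k H) lam.asModule
  obtain ⟨v, hv⟩ := exists_ne (0 : lam.asModule)
  have hspan := Stmt18Aux.span_e_top H lam hlam hv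
  have hcpt : IsCompactElement
      (⊤ : Submodule (MonoidAlgebra k K) (Representation.asModule (cIndRep H lam))) := by
    rw [← hspan]
    exact Submodule.singleton_span_isCompactElement _
  have hco : IsCoatomic
      (Submodule (MonoidAlgebra k K) (Representation.asModule (cIndRep H lam))) :=
    CompleteLattice.coatomic_of_top_compact hcpt
  have hev1 : Stmt18Aux.e H lam v ≠ 0 := by
    intro h0
    apply hv
    have := Stmt18Aux.ev_e_one H lam v
    rw [h0, Stmt18Aux.ev_zero] at this
    exact this.symm
  obtain ⟨m, hm, -⟩ :
      ∃ m : Submodule (MonoidAlgebra k K) (Representation.asModule (cIndRep H lam)),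
        IsCoatom m ∧ ⊥ ≤ m := by
    rcases hco.eq_top_or_exists_le_coatom ⊥ with h | h
    · exfalso
      apply hev1
      have h1 : Stmt18Aux.e H lam v ∈ (⊤ : Submodule (MonoidAlgebra k K) _) :=
        Submodule.mem_top
      rw [← h] at h1
      exact (Submodule.mem_bot _).mp h1
    · exact h
  letI acg := (inferInstance : AddCommGroup (Representation.asModule (cIndRep H lam)))
  letI mod := (inferInstance : Module (MonoidAlgebra k K) (Representation.asModule (cIndRep H lam)))
  letI hq : HasQuotient (Representation.asModule (cIndRep H lam))
      (Submodule (MonoidAlgebra k K) (Representation.asModule (cIndRep H lam))) :=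
    @Submodule.hasQuotient _ _ _ acg mod
  letI qacg : AddCommGroup (Representation.asModule (cIndRep H lam) ⧸ m) :=
    @Submodule.Quotient.addCommGroup _ _ _ acg mod m
  letI qmod : Module (MonoidAlgebra k K) (Representation.asModule (cIndRep H lam) ⧸ m) :=
    @Submodule.Quotient.module _ _ _ acg mod m
  -- the irreducible quotient (lifted to the auto-bound universe of `hdual`)
  have hνsimple : IsSimpleModule (MonoidAlgebra k K)
      (Representation.asModule (cIndRep H lam) ⧸ m) := isSimpleModule_iff_isCoatom.mpr hm
  haveI hνUsimple : IsSimpleModule (MonoidAlgebra k K)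
      (ULift.{u_1} (Representation.asModule (cIndRep H lam) ⧸ m)) :=
    haveI := hνsimple
    IsSimpleModule.congr ULift.moduleEquiv
  set ν : ModuleCat (MonoidAlgebra k K) :=
    ModuleCat.of (MonoidAlgebra k K)
      (ULift.{u_1} (Representation.asModule (cIndRep H lam) ⧸ m)) with hν
  -- the nonzero map lam → Res ν
  let φ : lam.asModule →ₗ[MonoidAlgebra k H]
      ((ModuleCat.restrictScalars (MonoidAlgebra.mapDomainRingHom k H.subtype)).obj ν) :=
    { toFun := fun w => ULift.up (Submodule.Quotient.mk (Stmt18Aux.e H lam w))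
      map_add' := fun w w' => by
        show ULift.up (Submodule.Quotient.mk (Stmt18Aux.e H lam (w + w'))) = _
        erw [Stmt18Aux.e_add, Submodule.Quotient.mk_add]
        rfl
      map_smul' := fun a w => by
        show ULift.up (Submodule.Quotient.mk (Stmt18Aux.e H lam (a • w))) = _
        rw [Stmt18Aux.e_smul, Submodule.Quotient.mk_smul]
        rfl }
  have hφ : φ ≠ 0 := by
    intro h0
    have h1 : ULift.up (Submodule.Quotient.mk (p := m) (Stmt18Aux.e H lam v))
        = (0 : ULift.{u_1} (Representation.asModule (cIndRep H lam) ⧸ m)) :=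
      DFunLike.congr_fun h0 v
    have h1' : Submodule.Quotient.mk (p := m) (Stmt18Aux.e H lam v) = 0 :=
      congrArg ULift.down h1
    have h2 : Stmt18Aux.e H lam v ∈ m := (Submodule.Quotient.mk_eq_zero m).mp h1'
    have h3 : (⊤ : Submodule (MonoidAlgebra k K) _) ≤ m := by
      rw [← hspan]
      exact Submodule.span_le.mpr (Set.singleton_subset_iff.mpr h2)
    exact hm.1 (top_le_iff.mp h3)
  obtain ⟨g, hg⟩ := hdual ν hνUsimple ⟨φ, hφ⟩
  -- g commutes with the MonoidAlgebra k H action written via mapDomainRingHom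
  have hg_smul : ∀ (a : MonoidAlgebra k H)
      (u : ULift.{u_1} (Representation.asModule (cIndRep H lam) ⧸ m)),
      g ((MonoidAlgebra.mapDomainRingHom k H.subtype a) • u) = a • g u :=
    fun a u => g.map_smul a u
  obtain ⟨S, hSfin, hScov⟩ := Stmt18Aux.exists_finite_cover H
  -- the Frobenius-dual map G : ν → π
  let G0 : (ULift.{u_1} (Representation.asModule (cIndRep H lam) ⧸ m)) →
      Representation.asModule (cIndRep H lam) := fun u =>
    show cInd H lam from
      ⟨fun x => g (MonoidAlgebra.single x (1 : k) • u), by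
        constructor
        · intro h x
          show g (MonoidAlgebra.single ((h : K) * x) (1 : k) • u) = _
          have h1 : (MonoidAlgebra.single ((h : K) * x) (1 : k) : MonoidAlgebra k K)
              = MonoidAlgebra.single (h : K) 1 * MonoidAlgebra.single x 1 := by
            rw [MonoidAlgebra.single_mul_single, one_mul]
          have h1' : (MonoidAlgebra.single (h : K) (1 : k) : MonoidAlgebra k K)
              = MonoidAlgebra.mapDomainRingHom k H.subtype (MonoidAlgebra.single h 1) :=
            (Stmt18Aux.mapDomainRingHom_single H h 1).symm
          rw [h1, mul_smul, h1', hg_smul, Stmt18Aux.lam_smul_single, one_smul]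
        · refine ⟨S, hSfin, ?_⟩
          rw [hScov]
          exact Set.subset_univ _⟩
  have hG0ev : ∀ u x, Stmt18Aux.ev H lam (G0 u) x
      = g (MonoidAlgebra.single x (1 : k) • u) := fun u x => rfl
  have hG0add : ∀ u u', G0 (u + u') = G0 u + G0 u' := by
    intro u u'
    apply Stmt18Aux.ev_inj
    funext x
    erw [Stmt18Aux.ev_add, Pi.add_apply, hG0ev, hG0ev, hG0ev, smul_add, map_add]
    rfl
  have hG0zero : G0 0 = 0 := by
    apply Stmt18Aux.ev_inj
    funext x
    erw [hG0ev, smul_zero, map_zero, Stmt18Aux.ev_zero]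
    rfl
  have hG0single : ∀ (z : K) (c : k) u,
      G0 (MonoidAlgebra.single z c • u) = MonoidAlgebra.single z c • G0 u := by
    intro z c u
    apply Stmt18Aux.ev_inj
    funext x
    rw [Stmt18Aux.ev_smul_single, hG0ev, hG0ev, smul_smul, MonoidAlgebra.single_mul_single,
      one_mul]
    have h1 : (MonoidAlgebra.single (x * z) (c : k) : MonoidAlgebra k K)
        = MonoidAlgebra.single (1 : K) c * MonoidAlgebra.single (x * z) 1 := by
      rw [MonoidAlgebra.single_mul_single, one_mul, mul_one]
    have h2 : (MonoidAlgebra.single (1 : K) (c : k) : MonoidAlgebra k K)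
        = MonoidAlgebra.mapDomainRingHom k H.subtype (MonoidAlgebra.single (1 : H) c) := by
      rw [Stmt18Aux.mapDomainRingHom_single]
      norm_num
    rw [h1, mul_smul, h2, hg_smul, Stmt18Aux.lam_smul_single, map_one]
    rfl
  let G : (ULift.{u_1} (Representation.asModule (cIndRep H lam) ⧸ m)) →ₗ[MonoidAlgebra k K]
      Representation.asModule (cIndRep H lam) :=
    { toFun := G0
      map_add' := hG0add
      map_smul' := by
        intro a u
        show G0 (a • u) = a • G0 u
        induction a using MonoidAlgebra.induction with
        | zero => rw [zero_smul, hG0zero, zero_smul]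
        | single_add z c a _ _ ih => rw [add_smul, hG0add, ih, hG0single, add_smul] }
  let mkU : Representation.asModule (cIndRep H lam) →ₗ[MonoidAlgebra k K]
      (ULift.{u_1} (Representation.asModule (cIndRep H lam) ⧸ m)) :=
    (ULift.moduleEquiv.symm.toLinearMap).comp m.mkQ
  obtain ⟨c, hc⟩ := hEnd (G.comp mkU)
  obtain ⟨u0, hu0⟩ := DFunLike.ne_iff.mp hg
  rw [LinearMap.zero_apply] at hu0
  obtain ⟨w0, hw0⟩ := Submodule.Quotient.mk_surjective m (ULift.down u0)
  have hfw0 : (G.comp mkU) w0 = G0 u0 := by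
    show G0 (ULift.up (Submodule.Quotient.mk w0)) = G0 u0
    rw [hw0]
    rfl
  have hG0u0 : Stmt18Aux.ev H lam (G0 u0) 1 = g u0 := by
    erw [hG0ev, ← MonoidAlgebra.one_def, one_smul]
  have hcne : c ≠ 0 := by
    intro h0
    apply hu0
    have h4 : (G.comp mkU) w0 = MonoidAlgebra.single (1 : K) c • w0 := hc w0
    rw [hfw0, h0] at h4
    have h6 : (MonoidAlgebra.single (1 : K) (0 : k) : MonoidAlgebra k K) = 0 :=
      MonoidAlgebra.single_zero _
    rw [h6, zero_smul] at h4
    rw [← hG0u0, h4, Stmt18Aux.ev_zero]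
    rfl
  have hmbot : m = ⊥ := by
    rw [eq_bot_iff]
    intro w hw
    have h1 : Submodule.Quotient.mk (p := m) w = 0 := (Submodule.Quotient.mk_eq_zero m).mpr hw
    have h2 : MonoidAlgebra.single (1 : K) c • w = 0 := by
      rw [← hc w]
      show G0 (ULift.up (Submodule.Quotient.mk w)) = 0
      rw [h1]
      exact hG0zero
    have h3 : MonoidAlgebra.single (1 : K) c⁻¹ • (MonoidAlgebra.single (1 : K) c • w)
        = w := by
      rw [smul_smul, MonoidAlgebra.single_mul_single, one_mul, inv_mul_cancel₀ hcne,
        ← MonoidAlgebra.one_def, one_smul]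
    rw [h2, smul_zero] at h3
    rw [Submodule.mem_bot]
    exact h3.symm
  have hbot : IsCoatom (⊥ : Submodule (MonoidAlgebra k K)
      (Representation.asModule (cIndRep H lam))) := hmbot ▸ hm
  exact (isSimpleModule_iff _ _).mpr (isSimpleOrder_iff_isCoatom_bot.mpr hbot)
end
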